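/- arXiv:1603.06498 — 3 statements merged into one kernel-verified Lean document; each statement's English description precedes it below -/
import Mathlib

section
/- Let f : ℝ → ℝ be three times continuously differentiable with f > 0 and f' > 0, assume (f'/f)'(y) < (Φ'/Φ)'(y) and (f'/f)'(y) < (Φ''/Φ')'(y) for all y, and assume there exist y₀, y∞ ∈ ℝ with (f'/f)(y₀) = (Φ'/Φ)(y₀) and (f'/f)(y∞) = (Φ''/Φ')(y∞). Let Θ > 0 and let 𝕪 : [0,Θ] → ℝ be the solution of 𝕪'(θ) = M₂(𝕪(θ))/M₁'(𝕪(θ)) with 𝕪(0) = y₀ (so M₁(𝕪(0)) = 0), and define 𝕣(ℓ) := ∫₀^ℓ (1 - 𝕪'(x)) · (Φ'(𝕪(x))/Φ(𝕪(x))) dx. Then exp(-𝕣(Θ)) · ∫₀^Θ f(𝕪(ℓ)) · exp(𝕣(ℓ)) dℓ = Φ(𝕪(Θ)) · M₁(𝕪(Θ)). -/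
open MeasureTheory Real Filter

/-- `Fa a x = ∫₀^∞ exp(-t² - 2xt) · t^a dt`, a Hermite-type function of negative degree. -/
noncomputable def Fa (a x : ℝ) : ℝ :=
  ∫ t in Set.Ioi (0 : ℝ), Real.exp (-(t ^ 2) - 2 * x * t) * t ^ a

/-- `Phi β σh δ c x = F_a(u(x))` with `a = δ/β - 1` and `u(x) = (c - βx)/(√β·σ̂)`. -/
noncomputable def Phi (β σh δ c : ℝ) (x : ℝ) : ℝ :=
  Fa (δ / β - 1) ((c - β * x) / (Real.sqrt β * σh))

/-- `M₁ = (f·Φ' - f'·Φ)/D` with `D = (Φ')² - Φ·Φ''`. -/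
noncomputable def M1 (β σh δ c : ℝ) (f : ℝ → ℝ) (y : ℝ) : ℝ :=
  (f y * deriv (Phi β σh δ c) y - deriv f y * Phi β σh δ c y) /
    ((deriv (Phi β σh δ c) y) ^ 2 - Phi β σh δ c y * deriv (deriv (Phi β σh δ c)) y)

/-- `M₂ = (f'·Φ' - f·Φ'')/D` with `D = (Φ')² - Φ·Φ''`. -/
noncomputable def M2 (β σh δ c : ℝ) (f : ℝ → ℝ) (y : ℝ) : ℝ :=
  (deriv f y * deriv (Phi β σh δ c) y - f y * deriv (deriv (Phi β σh δ c)) y) /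
    ((deriv (Phi β σh δ c) y) ^ 2 - Phi β σh δ c y * deriv (deriv (Phi β σh δ c)) y)


open Set Topology

lemma Fa_meas (a x : ℝ) :
    AEStronglyMeasurable (fun t : ℝ => Real.exp (-(t ^ 2) - 2 * x * t) * t ^ a)
      (volume.restrict (Ioi 0)) := by
  apply Measurable.aestronglyMeasurable
  exact (((measurable_id.pow_const 2).neg.sub ((measurable_const.mul measurable_id))).exp.mul
    (measurable_id.pow_const a))

lemma exp_quad_le (x t : ℝ) (ht : 0 ≤ t) :
    Real.exp (-(t ^ 2) - 2 * x * t) ≤ Real.exp (2 * x ^ 2) * Real.exp (-(1/2) * t ^ 2) := by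
  rw [← Real.exp_add]
  apply Real.exp_le_exp.2
  nlinarith [sq_nonneg (t - 2*x), sq_nonneg (t + 2*x), sq_nonneg x, sq_nonneg t]

lemma Fa_integrableOn {a : ℝ} (ha : -1 < a) (x : ℝ) :
    IntegrableOn (fun t : ℝ => Real.exp (-(t ^ 2) - 2 * x * t) * t ^ a) (Ioi 0) := by
  have hbase : IntegrableOn (fun t : ℝ => t ^ a * Real.exp (-(1/2) * t ^ 2)) (Ioi 0) :=
    integrableOn_rpow_mul_exp_neg_mul_sq (by norm_num) ha
  have : IntegrableOn (fun t : ℝ => Real.exp (2 * x ^ 2) * (t ^ a * Real.exp (-(1/2) * t ^ 2)))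
      (Ioi 0) := hbase.const_mul _
  refine this.mono' (Fa_meas a x) ?_
  filter_upwards [ae_restrict_mem measurableSet_Ioi] with t ht
  have ht' : (0:ℝ) < t := ht
  have h1 : 0 ≤ t ^ a := Real.rpow_nonneg ht'.le a
  rw [Real.norm_eq_abs, abs_of_nonneg (by positivity)]
  calc Real.exp (-(t ^ 2) - 2 * x * t) * t ^ a
      ≤ (Real.exp (2 * x ^ 2) * Real.exp (-(1/2) * t ^ 2)) * t ^ a :=
        mul_le_mul_of_nonneg_right (exp_quad_le x t ht'.le) h1
    _ = Real.exp (2 * x ^ 2) * (t ^ a * Real.exp (-(1/2) * t ^ 2)) := by ring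

lemma Fa_pos {a : ℝ} (ha : -1 < a) (x : ℝ) : 0 < Fa a x := by
  rw [Fa]
  refine (setIntegral_pos_iff_support_of_nonneg_ae ?_ ?_).2 ?_
  · filter_upwards [ae_restrict_mem measurableSet_Ioi] with t ht
    have ht' : (0:ℝ) < t := ht
    positivity
  · exact Fa_integrableOn ha x
  · have hsub : (Ioi (0:ℝ)) ⊆
        (Function.support fun t => Real.exp (-(t ^ 2) - 2 * x * t) * t ^ a) ∩ Ioi 0 := by
      intro t ht
      have ht' : (0:ℝ) < t := ht
      have h : 0 < Real.exp (-(t ^ 2) - 2 * x * t) * t ^ a := by positivity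
      exact ⟨h.ne', ht⟩
    calc (0:ENNReal) < volume (Ioi (0:ℝ)) := by simp
      _ ≤ _ := measure_mono hsub

lemma Fa_hasDerivAt {a : ℝ} (ha : -1 < a) (x₀ : ℝ) :
    HasDerivAt (Fa a) (-2 * Fa (a+1) x₀) x₀ := by
  have ha1 : (-1:ℝ) < a + 1 := by linarith
  have key := hasDerivAt_integral_of_dominated_loc_of_deriv_le
    (F := fun x t => Real.exp (-(t ^ 2) - 2 * x * t) * t ^ a)
    (F' := fun x t => (-2 * t) * (Real.exp (-(t ^ 2) - 2 * x * t) * t ^ a))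
    (x₀ := x₀) (s := Metric.ball x₀ 1) (μ := volume.restrict (Ioi 0))
    (bound := fun t => 2 * Real.exp (2 * (|x₀| + 1) ^ 2) * (t ^ (a+1) * Real.exp (-(1/2) * t ^ 2)))
    (Metric.ball_mem_nhds x₀ one_pos)
    (Eventually.of_forall fun x => Fa_meas a x)
    (Fa_integrableOn ha x₀)
    ?meas ?bound ?bint ?deriv
  case meas =>
    apply Measurable.aestronglyMeasurable
    exact (measurable_const.mul measurable_id).mul
      ((((measurable_id.pow_const 2).neg.sub ((measurable_const.mul measurable_id))).exp.mul
      (measurable_id.pow_const a)))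
  case bound =>
    filter_upwards [ae_restrict_mem measurableSet_Ioi] with t ht x hx
    have ht' : (0:ℝ) < t := ht
    have hxb : |x| ≤ |x₀| + 1 := by
      have := abs_sub_abs_le_abs_sub x x₀
      have : |x - x₀| < 1 := by simpa [Real.dist_eq] using (Metric.mem_ball.1 hx)
      cases abs_sub_abs_le_abs_sub x x₀ |>.lt_or_eq <;> nlinarith [abs_sub_abs_le_abs_sub x x₀]
    have h1 : Real.exp (-(t ^ 2) - 2 * x * t) ≤
        Real.exp (2 * (|x₀|+1) ^ 2) * Real.exp (-(1/2) * t ^ 2) := by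
      calc Real.exp (-(t ^ 2) - 2 * x * t)
          ≤ Real.exp (2 * x ^ 2) * Real.exp (-(1/2) * t ^ 2) := exp_quad_le x t ht'.le
        _ ≤ Real.exp (2 * (|x₀|+1) ^ 2) * Real.exp (-(1/2) * t ^ 2) := by
            apply mul_le_mul_of_nonneg_right _ (Real.exp_pos _).le
            apply Real.exp_le_exp.2
            have : x ^ 2 ≤ (|x₀|+1) ^ 2 := by
              rw [← sq_abs x]; apply pow_le_pow_left₀ (abs_nonneg x) hxb
            linarith
    have habs : ‖(-2 : ℝ) * t * (Real.exp (-(t ^ 2) - 2 * x * t) * t ^ a)‖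
        = 2 * t * (Real.exp (-(t ^ 2) - 2 * x * t) * t ^ a) := by
      rw [Real.norm_eq_abs, abs_of_nonpos (mul_nonpos_of_nonpos_of_nonneg (by nlinarith)
        (by positivity))]
      ring
    rw [habs]
    have hrw : t ^ (a+1) = t * t ^ a := by
      rw [Real.rpow_add ht', Real.rpow_one]; ring
    calc 2 * t * (Real.exp (-(t ^ 2) - 2 * x * t) * t ^ a)
        ≤ 2 * t * ((Real.exp (2 * (|x₀|+1) ^ 2) * Real.exp (-(1/2) * t ^ 2)) * t ^ a) := by
          apply mul_le_mul_of_nonneg_left _ (by positivity)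
          exact mul_le_mul_of_nonneg_right h1 (Real.rpow_nonneg ht'.le a)
      _ = 2 * Real.exp (2 * (|x₀| + 1) ^ 2) * (t ^ (a+1) * Real.exp (-(1/2) * t ^ 2)) := by
          rw [hrw]; ring
  case bint =>
    exact ((integrableOn_rpow_mul_exp_neg_mul_sq (by norm_num) ha1).const_mul _)
  case deriv =>
    filter_upwards [ae_restrict_mem measurableSet_Ioi] with t ht x hx
    have : HasDerivAt (fun x : ℝ => -(t ^ 2) - 2 * x * t) (-2 * t) x := by
      have h := ((hasDerivAt_id x).const_mul (2*t)).neg.const_add (-(t^2))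
      convert h using 1
      · rfl
      · rfl
      · funext z; simp; ring
      · ring
    have := (this.exp).mul_const (t ^ a)
    convert this using 1
    · rfl
    ring
  -- conclude
  have heq : (∫ t in Ioi (0:ℝ), (-2 * t) * (Real.exp (-(t ^ 2) - 2 * x₀ * t) * t ^ a))
      = -2 * Fa (a+1) x₀ := by
    rw [Fa, ← MeasureTheory.integral_const_mul]
    apply setIntegral_congr_fun measurableSet_Ioi
    intro t ht
    have ht' : (0:ℝ) < t := ht
    have hrw : t ^ (a+1) = t * t ^ a := by
      rw [Real.rpow_add ht', Real.rpow_one]; ring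
    show -2 * t * (Real.exp (-(t ^ 2) - 2 * x₀ * t) * t ^ a)
        = -2 * (Real.exp (-(t ^ 2) - 2 * x₀ * t) * t ^ (a+1))
    rw [hrw]; ring
  rw [← heq]
  exact key.2

lemma Fa_turan {a : ℝ} (ha : -1 < a) (x : ℝ) :
    Fa (a+1) x ^ 2 < Fa a x * Fa (a+2) x := by
  have ha1 : (-1:ℝ) < a + 1 := by linarith
  have ha2 : (-1:ℝ) < a + 2 := by linarith
  set lam := Fa (a+1) x / Fa a x with hlam
  have hFa := Fa_pos ha x
  -- the quadratic expansion pointwise on Ioi 0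
  have hpt : ∀ t ∈ Ioi (0:ℝ), (t - lam)^2 * (Real.exp (-(t ^ 2) - 2 * x * t) * t ^ a)
      = (Real.exp (-(t ^ 2) - 2 * x * t) * t ^ (a+2))
        - (2*lam) * (Real.exp (-(t ^ 2) - 2 * x * t) * t ^ (a+1))
        + lam^2 * (Real.exp (-(t ^ 2) - 2 * x * t) * t ^ a) := by
    intro t ht
    have ht' : (0:ℝ) < t := ht
    have h1 : t ^ (a+1) = t * t ^ a := by rw [Real.rpow_add ht', Real.rpow_one]; ring
    have h2 : t ^ (a+2) = t * t * t ^ a := by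
      have : (a + 2 : ℝ) = (a + 1) + 1 := by ring
      rw [this, Real.rpow_add ht', Real.rpow_one, h1]; ring
    rw [h1, h2]; ring
  have hint : IntegrableOn (fun t : ℝ =>
      (Real.exp (-(t ^ 2) - 2 * x * t) * t ^ (a+2))
        - (2*lam) * (Real.exp (-(t ^ 2) - 2 * x * t) * t ^ (a+1))
        + lam^2 * (Real.exp (-(t ^ 2) - 2 * x * t) * t ^ a)) (Ioi 0) :=
    ((Fa_integrableOn ha2 x).sub ((Fa_integrableOn ha1 x).const_mul _)).add
      ((Fa_integrableOn ha x).const_mul _)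
  have hintq : IntegrableOn (fun t : ℝ =>
      (t - lam)^2 * (Real.exp (-(t ^ 2) - 2 * x * t) * t ^ a)) (Ioi 0) :=
    IntegrableOn.congr_fun hint (fun t ht => (hpt t ht).symm) measurableSet_Ioi
  have hpos : 0 < ∫ t in Ioi (0:ℝ), (t - lam)^2 * (Real.exp (-(t ^ 2) - 2 * x * t) * t ^ a) := by
    refine (setIntegral_pos_iff_support_of_nonneg_ae ?_ hintq).2 ?_
    · filter_upwards [ae_restrict_mem measurableSet_Ioi] with t ht
      have ht' : (0:ℝ) < t := ht
      positivity
    · have hsub : (Ioi (0:ℝ)) \ {lam} ⊆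
          (Function.support fun t => (t - lam)^2 * (Real.exp (-(t ^ 2) - 2 * x * t) * t ^ a))
          ∩ Ioi 0 := by
        rintro t ⟨ht, hne⟩
        have ht' : (0:ℝ) < t := ht
        have h0 : t - lam ≠ 0 := sub_ne_zero.2 (by simpa using hne)
        have : 0 < (t - lam)^2 * (Real.exp (-(t ^ 2) - 2 * x * t) * t ^ a) := by positivity
        exact ⟨this.ne', ht⟩
      calc (0:ENNReal) < volume (Ioi (0:ℝ) \ {lam}) := by
            rw [measure_diff_null (measure_singleton lam)]; simp
        _ ≤ _ := measure_mono hsub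
  have hexp : (∫ t in Ioi (0:ℝ), (t - lam)^2 * (Real.exp (-(t ^ 2) - 2 * x * t) * t ^ a))
      = Fa (a+2) x - 2*lam*Fa (a+1) x + lam^2 * Fa a x := by
    rw [setIntegral_congr_fun measurableSet_Ioi hpt]
    have hI2 := Fa_integrableOn ha2 x
    have hI1 := (Fa_integrableOn ha1 x).const_mul (2*lam)
    have hI0 := (Fa_integrableOn ha x).const_mul (lam^2)
    have e1 : (∫ t in Ioi (0:ℝ),
        ((Real.exp (-(t ^ 2) - 2 * x * t) * t ^ (a+2))
          - (2*lam) * (Real.exp (-(t ^ 2) - 2 * x * t) * t ^ (a+1))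
          + lam^2 * (Real.exp (-(t ^ 2) - 2 * x * t) * t ^ a)))
        = ((∫ t in Ioi (0:ℝ), ((Real.exp (-(t ^ 2) - 2 * x * t) * t ^ (a+2))
          - (2*lam) * (Real.exp (-(t ^ 2) - 2 * x * t) * t ^ (a+1))))
        + ∫ t in Ioi (0:ℝ), lam^2 * (Real.exp (-(t ^ 2) - 2 * x * t) * t ^ a)) :=
      integral_add (hI2.sub hI1) hI0
    have e2 : (∫ t in Ioi (0:ℝ), ((Real.exp (-(t ^ 2) - 2 * x * t) * t ^ (a+2))
          - (2*lam) * (Real.exp (-(t ^ 2) - 2 * x * t) * t ^ (a+1))))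
        = ((∫ t in Ioi (0:ℝ), Real.exp (-(t ^ 2) - 2 * x * t) * t ^ (a+2))
          - ∫ t in Ioi (0:ℝ), (2*lam) * (Real.exp (-(t ^ 2) - 2 * x * t) * t ^ (a+1))) :=
      integral_sub hI2 hI1
    rw [e1, e2, MeasureTheory.integral_const_mul, MeasureTheory.integral_const_mul]
    rw [Fa, Fa, Fa]
  rw [hexp] at hpos
  have : lam * Fa a x = Fa (a+1) x := by rw [hlam, div_mul_cancel₀ _ hFa.ne']
  nlinarith [hpos, hFa, this]

section PhiDeriv
variable {β σh δ c : ℝ}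

namespace PhiAux

/-- the (negated) slope of `u` -/
noncomputable def k (β σh : ℝ) : ℝ := β / (Real.sqrt β * σh)
noncomputable def u (β σh c : ℝ) (y : ℝ) : ℝ := (c - β * y) / (Real.sqrt β * σh)
noncomputable def aa (β δ : ℝ) : ℝ := δ / β - 1

lemma k_pos (hβ : 0 < β) (hσ : 0 < σh) : 0 < k β σh := by
  have := Real.sqrt_pos.2 hβ
  unfold k; positivity

lemma ha_gt (hβ : 0 < β) (hδ : 0 < δ) : (-1:ℝ) < aa β δ := by
  unfold aa
  have : 0 < δ / β := div_pos hδ hβ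
  linarith

lemma u_hasDerivAt (hβ : 0 < β) (y : ℝ) : HasDerivAt (u β σh c) (-(k β σh)) y := by
  unfold u k
  have h : HasDerivAt (fun y : ℝ => (c - β * y)) (-β) y := by
    simpa using ((hasDerivAt_id y).const_mul β).const_sub c
  simpa [neg_div] using h.div_const (Real.sqrt β * σh)

lemma phi_eq : Phi β σh δ c = fun y => Fa (aa β δ) (u β σh c y) := rfl

lemma phi_hasDerivAt (hβ : 0 < β) (hδ : 0 < δ) (y : ℝ) :
    HasDerivAt (Phi β σh δ c) (2 * k β σh * Fa (aa β δ + 1) (u β σh c y)) y := by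
  have h := (Fa_hasDerivAt (ha_gt hβ hδ) (u β σh c y)).comp y (u_hasDerivAt (c := c) hβ y)
  rw [phi_eq]
  convert h using 1
  · rfl
  · rfl
  · rfl
  ring

lemma deriv_phi (hβ : 0 < β) (hδ : 0 < δ) : deriv (Phi β σh δ c) = fun y => 2 * k β σh * Fa (aa β δ + 1) (u β σh c y) :=
  funext fun y => (phi_hasDerivAt hβ hδ y).deriv

lemma deriv_phi_hasDerivAt (hβ : 0 < β) (hδ : 0 < δ) (y : ℝ) :
    HasDerivAt (deriv (Phi β σh δ c))
      (2 * k β σh * (2 * k β σh * Fa (aa β δ + 1 + 1) (u β σh c y))) y := by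
  rw [deriv_phi hβ hδ]
  have ha1 : (-1:ℝ) < aa β δ + 1 := by have := ha_gt (β := β) (δ := δ) hβ hδ; linarith
  have h := (Fa_hasDerivAt ha1 (u β σh c y)).comp y (u_hasDerivAt (c := c) hβ y)
  have := (h.const_mul (2 * k β σh))
  convert this using 1
  · rfl
  · rfl
  · rfl
  ring

lemma deriv2_phi (hβ : 0 < β) (hδ : 0 < δ) : deriv (deriv (Phi β σh δ c))
    = fun y => 4 * k β σh ^ 2 * Fa (aa β δ + 2) (u β σh c y) := by
  funext y
  rw [(deriv_phi_hasDerivAt hβ hδ y).deriv]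
  rw [show aa β δ + 1 + 1 = aa β δ + 2 by ring]
  ring

lemma deriv2_phi_hasDerivAt (hβ : 0 < β) (hδ : 0 < δ) (y : ℝ) :
    HasDerivAt (deriv (deriv (Phi β σh δ c)))
      (8 * k β σh ^ 3 * Fa (aa β δ + 3) (u β σh c y)) y := by
  rw [deriv2_phi hβ hδ]
  have ha2 : (-1:ℝ) < aa β δ + 2 := by have := ha_gt (β := β) (δ := δ) hβ hδ; linarith
  have h := (Fa_hasDerivAt ha2 (u β σh c y)).comp y (u_hasDerivAt (c := c) hβ y)
  have := (h.const_mul (4 * k β σh ^ 2))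
  convert this using 1
  · rfl
  · rfl
  · rfl
  rw [show aa β δ + 2 + 1 = aa β δ + 3 by ring]
  ring

lemma phi_pos (hβ : 0 < β) (hδ : 0 < δ) (y : ℝ) : 0 < Phi β σh δ c y := Fa_pos (ha_gt hβ hδ) _

lemma deriv_phi_pos (hβ : 0 < β) (hσ : 0 < σh) (hδ : 0 < δ) (y : ℝ) : 0 < deriv (Phi β σh δ c) y := by
  rw [deriv_phi hβ hδ]
  have ha1 : (-1:ℝ) < aa β δ + 1 := by have := ha_gt (β := β) (δ := δ) hβ hδ; linarith
  have := Fa_pos ha1 (u β σh c y)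
  have := k_pos (σh := σh) hβ hσ
  positivity

lemma deriv2_phi_pos (hβ : 0 < β) (hσ : 0 < σh) (hδ : 0 < δ) (y : ℝ) : 0 < deriv (deriv (Phi β σh δ c)) y := by
  rw [deriv2_phi hβ hδ]
  have ha2 : (-1:ℝ) < aa β δ + 2 := by have := ha_gt (β := β) (δ := δ) hβ hδ; linarith
  have := Fa_pos ha2 (u β σh c y)
  have := k_pos (σh := σh) hβ hσ
  positivity

lemma D_neg (hβ : 0 < β) (hσ : 0 < σh) (hδ : 0 < δ) (y : ℝ) :
    deriv (Phi β σh δ c) y ^ 2 - Phi β σh δ c y * deriv (deriv (Phi β σh δ c)) y < 0 := by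
  rw [deriv2_phi hβ hδ, deriv_phi hβ hδ, phi_eq]
  have h := Fa_turan (ha_gt (β := β) (δ := δ) hβ hδ) (u β σh c y)
  have hk := k_pos (β := β) (σh := σh) hβ hσ
  beta_reduce
  nlinarith [h, mul_pos hk hk]

end PhiAux
end PhiDeriv

/-- Core algebraic lemma: negativity of the numerator of `M₁'` in the region
between the two crossing points. -/
lemma sign_core {F F1 F2 P P1 P2 P3 : ℝ}
    (hF : 0 < F) (hP : 0 < P) (hP1 : 0 < P1)
    (hTur : P1 ^ 2 < P * P2)
    (hbb : (F2 * F - F1 ^ 2) * P ^ 2 < (P * P2 - P1 ^ 2) * F ^ 2)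
    (hcc : (F2 * F - F1 ^ 2) * P1 ^ 2 < (P1 * P3 - P2 ^ 2) * F ^ 2)
    (hreg1 : F * P1 ≤ F1 * P) (hreg2 : F1 * P1 ≤ F * P2) :
    F2 * (P * P2 - P1 ^ 2) + F1 * (P1 * P2 - P * P3) + F * (P1 * P3 - P2 ^ 2) < 0 := by
  set N := F2 * (P * P2 - P1 ^ 2) + F1 * (P1 * P2 - P * P3) + F * (P1 * P3 - P2 ^ 2) with hN
  set U := F1 * P1 * (P * P2 - P1 ^ 2) - F * P * (P1 * P3 - P2 ^ 2) with hU
  rcases le_or_gt 0 U with hUpos | hUneg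
  · -- use hcc; T = (F1*P1 - F*P2) * U
    have key1 : N * F * P1 ^ 2 - (F1 * P1 - F * P2) * U
        = ((F2 * F - F1 ^ 2) * P1 ^ 2 - (P1 * P3 - P2 ^ 2) * F ^ 2) * (P * P2 - P1 ^ 2) := by
      rw [hN, hU]; ring
    have h1 : ((F2 * F - F1 ^ 2) * P1 ^ 2 - (P1 * P3 - P2 ^ 2) * F ^ 2) * (P * P2 - P1 ^ 2)
        < 0 := mul_neg_of_neg_of_pos (by linarith) (by linarith)
    have h2 : (F1 * P1 - F * P2) * U ≤ 0 :=
      mul_nonpos_of_nonpos_of_nonneg (by linarith) hUpos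
    have h3 : N * F * P1 ^ 2 < 0 := by linarith
    nlinarith [h3, mul_pos hF (mul_pos hP1 hP1)]
  · -- use hbb; T' * P * P1 = (F1*P - F*P1) * (U*P - F*(P*P2-P1^2)^2)
    have key2 : (N * F * P ^ 2) * P1
        - (((F2 * F - F1 ^ 2) * P ^ 2 - (P * P2 - P1 ^ 2) * F ^ 2) * (P * P2 - P1 ^ 2)) * P1
        = (F1 * P - F * P1) * (U * P - F * (P * P2 - P1 ^ 2) ^ 2) := by
      rw [hN, hU]; ring
    have h1 : ((F2 * F - F1 ^ 2) * P ^ 2 - (P * P2 - P1 ^ 2) * F ^ 2) * (P * P2 - P1 ^ 2) < 0 :=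
      mul_neg_of_neg_of_pos (by linarith) (by linarith)
    have h2 : U * P - F * (P * P2 - P1 ^ 2) ^ 2 < 0 := by
      have : U * P < 0 := mul_neg_of_neg_of_pos hUneg hP
      nlinarith [sq_nonneg (P * P2 - P1 ^ 2)]
    have h3 : (F1 * P - F * P1) * (U * P - F * (P * P2 - P1 ^ 2) ^ 2) ≤ 0 :=
      mul_nonpos_of_nonneg_of_nonpos (by linarith) h2.le
    have h4 : (N * F * P ^ 2) * P1 < 0 := by nlinarith [key2, h1, h3, hP1]
    nlinarith [h4, mul_pos hF (mul_pos (mul_pos hP hP) hP1)]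

/-- Lemma 4.6 (value on the boundary): for the solution `𝕪` of the boundary ODE with
`𝕪(0) = y₀`, the expected proceeds of the `𝕪`-reflected strategy satisfy
`exp(-𝕣(Θ))·∫₀^Θ f(𝕪(ℓ))·exp(𝕣(ℓ)) dℓ = Φ(𝕪(Θ))·M₁(𝕪(Θ))`. -/
theorem value_on_boundary (β σh δ c : ℝ) (hβ : 0 < β) (hσ : 0 < σh) (hδ : 0 < δ)
    (f : ℝ → ℝ) (hf : ContDiff ℝ 3 f)
    (hfpos : ∀ y : ℝ, 0 < f y) (hf'pos : ∀ y : ℝ, 0 < deriv f y)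
    (hb : ∀ y : ℝ, deriv (fun z => deriv f z / f z) y <
      deriv (fun z => deriv (Phi β σh δ c) z / Phi β σh δ c z) y)
    (hc : ∀ y : ℝ, deriv (fun z => deriv f z / f z) y <
      deriv (fun z => deriv (deriv (Phi β σh δ c)) z / deriv (Phi β σh δ c) z) y)
    (y₀ yinf : ℝ)
    (hy₀ : deriv f y₀ / f y₀ = deriv (Phi β σh δ c) y₀ / Phi β σh δ c y₀)
    (hyinf : deriv f yinf / f yinf =
      deriv (deriv (Phi β σh δ c)) yinf / deriv (Phi β σh δ c) yinf)
    (Θ : ℝ) (hΘ : 0 < Θ) (Y Yd : ℝ → ℝ) (hY0 : Y 0 = y₀)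
    (hYd : ∀ ℓ ∈ Set.Icc (0 : ℝ) Θ, HasDerivWithinAt Y (Yd ℓ) (Set.Icc 0 Θ) ℓ)
    (hODE : ∀ ℓ ∈ Set.Icc (0 : ℝ) Θ,
      Yd ℓ = M2 β σh δ c f (Y ℓ) / deriv (M1 β σh δ c f) (Y ℓ)) :
    let r : ℝ → ℝ := fun ℓ =>
      ∫ x in (0 : ℝ)..ℓ, (1 - Yd x) * (deriv (Phi β σh δ c) (Y x) / Phi β σh δ c (Y x));
    Real.exp (-(r Θ)) * (∫ ℓ in (0 : ℝ)..Θ, f (Y ℓ) * Real.exp (r ℓ)) =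
      Phi β σh δ c (Y Θ) * M1 β σh δ c f (Y Θ) := by
  intro r
  -- ## abbreviations
  set P : ℝ → ℝ := Phi β σh δ c with hPdef
  set P1 : ℝ → ℝ := deriv (Phi β σh δ c) with hP1def
  set P2 : ℝ → ℝ := deriv (deriv (Phi β σh δ c)) with hP2def
  set P3 : ℝ → ℝ := fun y =>
    8 * PhiAux.k β σh ^ 3 * Fa (PhiAux.aa β δ + 3) (PhiAux.u β σh c y) with hP3def
  set f1 : ℝ → ℝ := deriv f with hf1def
  set f2 : ℝ → ℝ := deriv (deriv f) with hf2def
  -- ## basic facts: f side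
  have h3 : ContDiff ℝ ((2:ℕ) + 1) f := by exact_mod_cast hf
  have h2 : ContDiff ℝ 2 (deriv f) := (contDiff_succ_iff_deriv.mp h3).2.2
  have h2' : ContDiff ℝ ((1:ℕ) + 1) (deriv f) := by exact_mod_cast h2
  have h1 : ContDiff ℝ 1 (deriv (deriv f)) := (contDiff_succ_iff_deriv.mp h2').2.2
  have hdf : Differentiable ℝ f := h3.differentiable (by norm_num)
  have hdf1 : Differentiable ℝ (deriv f) := h2.differentiable (by norm_num)
  have hf2cont : Continuous f2 := h1.continuous
  have hf1cont : Continuous f1 := hdf1.continuous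
  have hfcont : Continuous f := hdf.continuous
  have hfd1 : ∀ y, HasDerivAt f (f1 y) y := fun y => (hdf y).hasDerivAt
  have hfd2 : ∀ y, HasDerivAt f1 (f2 y) y := fun y => (hdf1 y).hasDerivAt
  -- ## basic facts: Phi side
  have hP0 : ∀ y, 0 < P y := PhiAux.phi_pos hβ hδ
  have hP1pos : ∀ y, 0 < P1 y := PhiAux.deriv_phi_pos hβ hσ hδ
  have hP2pos : ∀ y, 0 < P2 y := PhiAux.deriv2_phi_pos hβ hσ hδ
  have hDneg : ∀ y, P1 y ^ 2 - P y * P2 y < 0 := fun y => PhiAux.D_neg hβ hσ hδ y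
  have hPd1 : ∀ y, HasDerivAt P (P1 y) y := by
    intro y
    have h := PhiAux.phi_hasDerivAt (σh := σh) (c := c) hβ hδ y
    rw [hP1def, h.deriv]; exact h
  have hPd2 : ∀ y, HasDerivAt P1 (P2 y) y := by
    intro y
    have h := PhiAux.deriv_phi_hasDerivAt (σh := σh) (c := c) hβ hδ y
    rw [hP2def, h.deriv]; exact h
  have hPd3 : ∀ y, HasDerivAt P2 (P3 y) y := fun y =>
    PhiAux.deriv2_phi_hasDerivAt (σh := σh) (c := c) hβ hδ y
  have hPcont : Continuous P :=
    Differentiable.continuous (fun y => (hPd1 y).differentiableAt)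
  have hP1cont : Continuous P1 :=
    Differentiable.continuous (fun y => (hPd2 y).differentiableAt)
  have hP2cont : Continuous P2 :=
    Differentiable.continuous (fun y => (hPd3 y).differentiableAt)
  have hP3cont : Continuous P3 := by
    rw [hP3def]
    have haa3 : (-1:ℝ) < PhiAux.aa β δ + 3 := by
      have := PhiAux.ha_gt (β := β) (δ := δ) hβ hδ; linarith
    have hFa3 : Continuous (Fa (PhiAux.aa β δ + 3)) :=
      Differentiable.continuous (fun x => (Fa_hasDerivAt haa3 x).differentiableAt)
    have hu : Continuous (PhiAux.u β σh c) := by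
      unfold PhiAux.u; fun_prop
    exact continuous_const.mul (hFa3.comp hu)
  -- ## cleared-denominator inequalities from hb, hc
  have hbb : ∀ y, (f2 y * f y - f1 y ^ 2) * P y ^ 2 < (P y * P2 y - P1 y ^ 2) * f y ^ 2 := by
    intro y
    have hg : HasDerivAt (fun z => f1 z / f z) ((f2 y * f y - f1 y * f1 y) / f y ^ 2) y :=
      (hfd2 y).div (hfd1 y) (hfpos y).ne'
    have hp : HasDerivAt (fun z => P1 z / P z) ((P2 y * P y - P1 y * P1 y) / P y ^ 2) y :=
      (hPd2 y).div (hPd1 y) (hP0 y).ne'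
    have h := hb y
    rw [hg.deriv, hp.deriv] at h
    have h2 := (div_lt_div_iff₀ (pow_pos (hfpos y) 2) (pow_pos (hP0 y) 2)).1 h
    nlinarith [h2]
  have hcc : ∀ y, (f2 y * f y - f1 y ^ 2) * P1 y ^ 2 < (P1 y * P3 y - P2 y ^ 2) * f y ^ 2 := by
    intro y
    have hg : HasDerivAt (fun z => f1 z / f z) ((f2 y * f y - f1 y * f1 y) / f y ^ 2) y :=
      (hfd2 y).div (hfd1 y) (hfpos y).ne'
    have hp : HasDerivAt (fun z => P2 z / P1 z) ((P3 y * P1 y - P2 y * P2 y) / P1 y ^ 2) y :=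
      (hPd3 y).div (hPd2 y) (hP1pos y).ne'
    have h := hc y
    rw [hg.deriv, hp.deriv] at h
    have h2 := (div_lt_div_iff₀ (pow_pos (hfpos y) 2) (pow_pos (hP1pos y) 2)).1 h
    nlinarith [h2]
  -- ## strict monotonicity of the two crossing functions
  have hGanti : StrictAnti (fun y => f1 y / f y - P1 y / P y) := by
    apply strictAnti_of_deriv_neg
    intro y
    have hg : HasDerivAt (fun z => f1 z / f z) ((f2 y * f y - f1 y * f1 y) / f y ^ 2) y :=
      (hfd2 y).div (hfd1 y) (hfpos y).ne'
    have hp : HasDerivAt (fun z => P1 z / P z) ((P2 y * P y - P1 y * P1 y) / P y ^ 2) y :=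
      (hPd2 y).div (hPd1 y) (hP0 y).ne'
    have hgp : HasDerivAt (fun z => f1 z / f z - P1 z / P z)
        ((f2 y * f y - f1 y * f1 y) / f y ^ 2 - (P2 y * P y - P1 y * P1 y) / P y ^ 2) y :=
      hg.sub hp
    rw [hgp.deriv]
    have h := hb y
    rw [hg.deriv, hp.deriv] at h
    linarith
  have hHanti : StrictAnti (fun y => f1 y / f y - P2 y / P1 y) := by
    apply strictAnti_of_deriv_neg
    intro y
    have hg : HasDerivAt (fun z => f1 z / f z) ((f2 y * f y - f1 y * f1 y) / f y ^ 2) y :=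
      (hfd2 y).div (hfd1 y) (hfpos y).ne'
    have hp : HasDerivAt (fun z => P2 z / P1 z) ((P3 y * P1 y - P2 y * P2 y) / P1 y ^ 2) y :=
      (hPd3 y).div (hPd2 y) (hP1pos y).ne'
    have hgp : HasDerivAt (fun z => f1 z / f z - P2 z / P1 z)
        ((f2 y * f y - f1 y * f1 y) / f y ^ 2 - (P3 y * P1 y - P2 y * P2 y) / P1 y ^ 2) y :=
      hg.sub hp
    rw [hgp.deriv]
    have h := hc y
    rw [hg.deriv, hp.deriv] at h
    linarith
  -- ## region inequalities
  have hGy₀ : f1 y₀ / f y₀ - P1 y₀ / P y₀ = 0 := sub_eq_zero.2 hy₀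
  have hHyinf : f1 yinf / f yinf - P2 yinf / P1 yinf = 0 := sub_eq_zero.2 hyinf
  have hreg1 : ∀ y, y ≤ y₀ → f y * P1 y ≤ f1 y * P y := by
    intro y hy
    have h0 : 0 ≤ f1 y / f y - P1 y / P y := by
      rcases eq_or_lt_of_le hy with h | h
      · rw [h, hGy₀]
      · have := hGanti h
        beta_reduce at this
        rw [hGy₀] at this
        linarith
    have : P1 y / P y ≤ f1 y / f y := by linarith
    have := (div_le_div_iff₀ (hP0 y) (hfpos y)).1 this
    linarith
  have hreg2 : ∀ y, yinf ≤ y → f1 y * P1 y ≤ f y * P2 y := by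
    intro y hy
    have h0 : f1 y / f y - P2 y / P1 y ≤ 0 := by
      rcases eq_or_lt_of_le hy with h | h
      · rw [← h, hHyinf]
      · have := hHanti h
        beta_reduce at this
        rw [hHyinf] at this
        linarith
    have : f1 y / f y ≤ P2 y / P1 y := by linarith
    have := (div_le_div_iff₀ (hfpos y) (hP1pos y)).1 this
    linarith
  have hreg2' : ∀ y, y < yinf → f y * P2 y < f1 y * P1 y := by
    intro y hy
    have h0 : 0 < f1 y / f y - P2 y / P1 y := by
      have := hHanti hy
      beta_reduce at this
      rw [hHyinf] at this
      linarith
    have : P2 y / P1 y < f1 y / f y := by linarith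
    have := (div_lt_div_iff₀ (hP1pos y) (hfpos y)).1 this
    linarith
  have hy0inf : yinf < y₀ := by
    by_contra hcon
    push_neg at hcon
    have h1 : (0:ℝ) ≤ f1 y₀ / f y₀ - P2 y₀ / P1 y₀ := by
      rcases eq_or_lt_of_le hcon with h | h
      · rw [h, hHyinf]
      · have := hHanti h
        beta_reduce at this
        rw [hHyinf] at this
        linarith
    have h2 : f1 y₀ / f y₀ - P2 y₀ / P1 y₀ = (P1 y₀ ^ 2 - P y₀ * P2 y₀) / (P y₀ * P1 y₀) := by
      rw [hy₀]
      rw [div_sub_div _ _ (hP0 y₀).ne' (hP1pos y₀).ne', div_eq_div_iff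
        (mul_pos (hP0 y₀) (hP1pos y₀)).ne' (mul_pos (hP0 y₀) (hP1pos y₀)).ne']
      ring
    rw [h2] at h1
    have h3 : (P1 y₀ ^ 2 - P y₀ * P2 y₀) / (P y₀ * P1 y₀) < 0 :=
      div_neg_of_neg_of_pos (hDneg y₀) (mul_pos (hP0 y₀) (hP1pos y₀))
    linarith
  -- ## M1, M2 rewriting
  have hM1eq : ∀ y, M1 β σh δ c f y = (f y * P1 y - f1 y * P y) / (P1 y ^ 2 - P y * P2 y) :=
    fun y => rfl
  have hM2eq : ∀ y, M2 β σh δ c f y = (f1 y * P1 y - f y * P2 y) / (P1 y ^ 2 - P y * P2 y) :=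
    fun y => rfl
  have hM1y₀ : M1 β σh δ c f y₀ = 0 := by
    rw [hM1eq]
    have hnum : f y₀ * P1 y₀ - f1 y₀ * P y₀ = 0 := by
      have h := hy₀
      rw [div_eq_div_iff (hfpos y₀).ne' (hP0 y₀).ne'] at h
      linarith [h]
    rw [hnum, zero_div]
  have hM2nonneg : ∀ y, yinf ≤ y → 0 ≤ M2 β σh δ c f y := by
    intro y hy
    rw [hM2eq]
    apply div_nonneg_iff.2
    right
    exact ⟨by linarith [hreg2 y hy], (hDneg y).le⟩
  have hM2neg : ∀ y, y < yinf → M2 β σh δ c f y < 0 := by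
    intro y hy
    rw [hM2eq]
    exact div_neg_of_pos_of_neg (by linarith [hreg2' y hy]) (hDneg y)
  have hkeyid : ∀ y, P y * M2 β σh δ c f y + P1 y * M1 β σh δ c f y = f y := by
    intro y
    rw [hM1eq, hM2eq]
    have hD := (hDneg y).ne
    field_simp
    ring
  -- ## derivative of M1
  set NN : ℝ → ℝ := fun y => f2 y * (P y * P2 y - P1 y ^ 2) + f1 y * (P1 y * P2 y - P y * P3 y)
    + f y * (P1 y * P3 y - P2 y ^ 2) with hNNdef
  have hM1d : ∀ y, HasDerivAt (M1 β σh δ c f)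
      (P y * NN y / (P1 y ^ 2 - P y * P2 y) ^ 2) y := by
    intro y
    have hNum : HasDerivAt (fun z => f z * P1 z - f1 z * P z)
        ((f1 y * P1 y + f y * P2 y) - (f2 y * P y + f1 y * P1 y)) y :=
      ((hfd1 y).mul (hPd2 y)).sub ((hfd2 y).mul (hPd1 y))
    have hsq : HasDerivAt (fun z => P1 z ^ 2) (2 * P1 y ^ 1 * P2 y) y := by
      exact (hPd2 y).pow 2
    have hDen : HasDerivAt (fun z => P1 z ^ 2 - P z * P2 z)
        (2 * P1 y ^ 1 * P2 y - (P1 y * P2 y + P y * P3 y)) y :=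
      hsq.sub ((hPd1 y).mul (hPd3 y))
    have h := hNum.div hDen (hDneg y).ne
    have heqfun : M1 β σh δ c f
        = fun z => (f z * P1 z - f1 z * P z) / (P1 z ^ 2 - P z * P2 z) := rfl
    rw [heqfun]
    convert h using 1
    · rfl
    · rfl
    · rfl
    rw [hNNdef]
    field_simp
    ring
  have hderivM1 : deriv (M1 β σh δ c f)
      = fun y => P y * NN y / (P1 y ^ 2 - P y * P2 y) ^ 2 :=
    funext fun y => (hM1d y).deriv
  have hNNneg : ∀ y, yinf ≤ y → y ≤ y₀ → NN y < 0 := by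
    intro y hy1 hy2
    rw [hNNdef]
    exact sign_core (hfpos y) (hP0 y) (hP1pos y) (by nlinarith [hDneg y])
      (hbb y) (hcc y) (hreg1 y hy2) (hreg2 y hy1)
  have hmneg : ∀ y, yinf ≤ y → y ≤ y₀ → deriv (M1 β σh δ c f) y < 0 := by
    intro y hy1 hy2
    rw [hderivM1]
    exact div_neg_of_neg_of_pos
      (mul_neg_of_pos_of_neg (hP0 y) (hNNneg y hy1 hy2))
      (by nlinarith [hDneg y] : (0:ℝ) < (P1 y ^ 2 - P y * P2 y) ^ 2)
  -- ## continuity of deriv M1 and negativity on a strip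
  have hmcont : Continuous (deriv (M1 β σh δ c f)) := by
    rw [hderivM1]
    apply Continuous.div
    · apply hPcont.mul
      rw [hNNdef]
      fun_prop
    · fun_prop
    · exact fun y => pow_ne_zero 2 (hDneg y).ne
  have hstrip : ∃ ε > 0, ∀ y, yinf - ε ≤ y → y ≤ y₀ + ε → deriv (M1 β σh δ c f) y < 0 := by
    have hopen : IsOpen {y : ℝ | deriv (M1 β σh δ c f) y < 0} :=
      isOpen_lt hmcont continuous_const
    obtain ⟨r1, hr1, hball1⟩ := Metric.isOpen_iff.1 hopen yinf (hmneg yinf le_rfl hy0inf.le)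
    obtain ⟨r2, hr2, hball2⟩ := Metric.isOpen_iff.1 hopen y₀ (hmneg y₀ hy0inf.le le_rfl)
    refine ⟨min r1 r2 / 2, by positivity, ?_⟩
    intro y hylo hyhi
    rcases lt_or_ge y yinf with h | h
    · apply hball1
      rw [Metric.mem_ball, Real.dist_eq, abs_of_neg (by linarith)]
      have : min r1 r2 ≤ r1 := min_le_left _ _
      linarith
    rcases le_or_gt y y₀ with h' | h'
    · exact hmneg y h h'
    · apply hball2
      rw [Metric.mem_ball, Real.dist_eq, abs_of_pos (by linarith)]
      have : min r1 r2 ≤ r2 := min_le_right _ _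
      linarith
  obtain ⟨ε, hε, hstrip⟩ := hstrip
  -- ## continuity of Y
  have hYcont : ContinuousOn Y (Icc 0 Θ) := fun ℓ hℓ => (hYd ℓ hℓ).continuousWithinAt
  -- ## invariance: Y stays in [yinf, y₀]
  have hrange : ∀ ℓ ∈ Icc (0:ℝ) Θ, Y ℓ ∈ Icc yinf y₀ := by
    by_contra hcon
    push_neg at hcon
    obtain ⟨b, hbmem, hbout⟩ := hcon
    set S : Set ℝ := Icc 0 b ∩ Y ⁻¹' (Icc yinf y₀) with hSdef
    have hbΘ : b ≤ Θ := hbmem.2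
    have hb0 : 0 ≤ b := hbmem.1
    have hIccsub : Icc (0:ℝ) b ⊆ Icc 0 Θ := Icc_subset_Icc le_rfl hbΘ
    have hSclosed : IsClosed S :=
      (hYcont.mono hIccsub).preimage_isClosed_of_isClosed isClosed_Icc isClosed_Icc
    have hS0 : (0:ℝ) ∈ S := by
      constructor
      · exact ⟨le_rfl, hb0⟩
      · simp only [mem_preimage, hY0]
        exact ⟨hy0inf.le, le_rfl⟩
    have hSbdd : BddAbove S := ⟨b, fun x hx => hx.1.2⟩
    set τ := sSup S with hτdef
    have hτS : τ ∈ S := hSclosed.csSup_mem ⟨0, hS0⟩ hSbdd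
    have hτmem : τ ∈ Icc (0:ℝ) b := hτS.1
    have hYτ : Y τ ∈ Icc yinf y₀ := hτS.2
    have hτb : τ < b := by
      rcases eq_or_lt_of_le hτmem.2 with h | h
      · exfalso; apply hbout; rw [← h]; exact hYτ
      · exact h
    have hnot : ∀ ℓ, τ < ℓ → ℓ ≤ b → Y ℓ ∉ Icc yinf y₀ := by
      intro ℓ hℓ1 hℓ2 hmem
      have : ℓ ∈ S := ⟨⟨by linarith [hτmem.1], hℓ2⟩, hmem⟩
      exact absurd (le_csSup hSbdd this) (not_le.2 hℓ1)
    -- choose b' close to τ where Y stays in the ε-strip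
    have hτΘ : τ ∈ Icc (0:ℝ) Θ := ⟨hτmem.1, le_trans hτmem.2 hbΘ⟩
    have hcontτ : ContinuousWithinAt Y (Icc 0 Θ) τ := hYcont τ hτΘ
    obtain ⟨d, hd, hdball⟩ := Metric.continuousWithinAt_iff.1 hcontτ ε hε
    set b' := min b (τ + d / 2) with hb'def
    have hτb' : τ < b' := by
      apply lt_min hτb
      linarith
    have hb'le : b' ≤ b := min_le_left _ _
    have hb'Θ : b' ≤ Θ := le_trans hb'le hbΘ
    have hstripY : ∀ ℓ ∈ Icc τ b', yinf - ε ≤ Y ℓ ∧ Y ℓ ≤ y₀ + ε := by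
      intro ℓ hℓ
      have hℓΘ : ℓ ∈ Icc (0:ℝ) Θ := ⟨le_trans hτmem.1 hℓ.1, le_trans hℓ.2 hb'Θ⟩
      have hdist : dist ℓ τ < d := by
        rw [Real.dist_eq, abs_of_nonneg (by linarith [hℓ.1])]
        have := hℓ.2
        have h2 : b' ≤ τ + d / 2 := min_le_right _ _
        linarith
      have := hdball hℓΘ hdist
      rw [Real.dist_eq, abs_lt] at this
      constructor <;> [linarith [hYτ.1, this.1]; linarith [hYτ.2, this.2]]
    -- case analysis on which side Y b exits
    have hIccb'Θ : Icc τ b' ⊆ Icc (0:ℝ) Θ :=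
      Icc_subset_Icc hτmem.1 hb'Θ
    have hYcontτb' : ContinuousOn Y (Icc τ b') := hYcont.mono hIccb'Θ
    have hioo : ∀ ℓ ∈ Ioo τ b', HasDerivAt Y (Yd ℓ) ℓ := by
      intro ℓ hℓ
      have hℓΘ : ℓ ∈ Icc (0:ℝ) Θ := ⟨le_trans hτmem.1 hℓ.1.le, le_trans hℓ.2.le hb'Θ⟩
      apply (hYd ℓ hℓΘ).hasDerivAt
      apply Icc_mem_nhds
      · linarith [hτmem.1, hℓ.1]
      · rcases eq_or_lt_of_le hb'Θ with h | h
        · rw [← h]; exact hℓ.2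
        · linarith [hℓ.2]
    rcases not_and_or.1 (fun h : yinf ≤ Y b ∧ Y b ≤ y₀ => hbout ⟨h.1, h.2⟩) with hside | hside
    · -- Y b < yinf : Y increases back, contradiction
      push_neg at hside
      have hbelow : ∀ ℓ, τ < ℓ → ℓ ≤ b → Y ℓ < yinf := by
        intro ℓ hℓ1 hℓ2
        by_contra hge
        push_neg at hge
        -- Y ℓ ≥ yinf but Y ℓ ∉ [yinf, y₀] so Y ℓ > y₀ ≥ yinf > Y b : IVT gives a return
        have hℓout := hnot ℓ hℓ1 hℓ2
        have hgt : y₀ < Y ℓ := by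
          by_contra hle
          push_neg at hle
          exact hℓout ⟨hge, hle⟩
        have hivt := intermediate_value_Icc' hℓ2 (hYcont.mono
          (Icc_subset_Icc (by linarith [hτmem.1]) hbΘ))
        have : yinf ∈ Icc (Y b) (Y ℓ) := ⟨hside.le, by linarith⟩
        obtain ⟨ℓ2, hℓ2mem, hℓ2eq⟩ := hivt this
        exact hnot ℓ2 (by linarith [hℓ2mem.1]) hℓ2mem.2 (by rw [hℓ2eq]; exact ⟨le_rfl, hy0inf.le⟩)
      have hmono : MonotoneOn Y (Icc τ b') := by
        apply monotoneOn_of_deriv_nonneg (convex_Icc _ _) hYcontτb'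
        · intro ℓ hℓ
          rw [interior_Icc] at hℓ
          exact ((hioo ℓ hℓ).differentiableAt).differentiableWithinAt
        · intro ℓ hℓ
          rw [interior_Icc] at hℓ
          rw [(hioo ℓ hℓ).deriv]
          have hℓΘ : ℓ ∈ Icc (0:ℝ) Θ := ⟨le_trans hτmem.1 hℓ.1.le, le_trans hℓ.2.le hb'Θ⟩
          rw [hODE ℓ hℓΘ]
          have hYlt : Y ℓ < yinf := hbelow ℓ hℓ.1 (le_trans hℓ.2.le hb'le)
          have hYstrip := hstripY ℓ ⟨hℓ.1.le, hℓ.2.le⟩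
          have hm : deriv (M1 β σh δ c f) (Y ℓ) < 0 :=
            hstrip (Y ℓ) hYstrip.1 (by linarith [hy0inf])
          have hM2 : M2 β σh δ c f (Y ℓ) < 0 := hM2neg (Y ℓ) hYlt
          exact le_of_lt (div_pos_iff.2 (Or.inr ⟨hM2, hm⟩))
      have h1 : Y τ ≤ Y b' := hmono ⟨le_rfl, hτb'.le⟩ ⟨hτb'.le, le_rfl⟩ hτb'.le
      have h2 : Y b' < yinf := hbelow b' hτb' hb'le
      linarith [hYτ.1]
    · -- Y b > y₀ : Y decreases back, contradiction
      push_neg at hside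
      have habove : ∀ ℓ, τ < ℓ → ℓ ≤ b → y₀ < Y ℓ := by
        intro ℓ hℓ1 hℓ2
        by_contra hge
        push_neg at hge
        have hℓout := hnot ℓ hℓ1 hℓ2
        have hlt : Y ℓ < yinf := by
          by_contra hle
          push_neg at hle
          exact hℓout ⟨hle, hge⟩
        have hivt := intermediate_value_Icc hℓ2 (hYcont.mono
          (Icc_subset_Icc (by linarith [hτmem.1]) hbΘ))
        have : y₀ ∈ Icc (Y ℓ) (Y b) := ⟨by linarith, hside.le⟩
        obtain ⟨ℓ2, hℓ2mem, hℓ2eq⟩ := hivt this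
        exact hnot ℓ2 (by linarith [hℓ2mem.1]) hℓ2mem.2 (by rw [hℓ2eq]; exact ⟨hy0inf.le, le_rfl⟩)
      have hanti : AntitoneOn Y (Icc τ b') := by
        apply antitoneOn_of_deriv_nonpos (convex_Icc _ _) hYcontτb'
        · intro ℓ hℓ
          rw [interior_Icc] at hℓ
          exact ((hioo ℓ hℓ).differentiableAt).differentiableWithinAt
        · intro ℓ hℓ
          rw [interior_Icc] at hℓ
          rw [(hioo ℓ hℓ).deriv]
          have hℓΘ : ℓ ∈ Icc (0:ℝ) Θ := ⟨le_trans hτmem.1 hℓ.1.le, le_trans hℓ.2.le hb'Θ⟩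
          rw [hODE ℓ hℓΘ]
          have hYgt : y₀ < Y ℓ := habove ℓ hℓ.1 (le_trans hℓ.2.le hb'le)
          have hYstrip := hstripY ℓ ⟨hℓ.1.le, hℓ.2.le⟩
          have hm : deriv (M1 β σh δ c f) (Y ℓ) < 0 :=
            hstrip (Y ℓ) hYstrip.1 hYstrip.2
          have hM2 : 0 ≤ M2 β σh δ c f (Y ℓ) := hM2nonneg (Y ℓ) (by linarith [hy0inf])
          exact div_nonpos_of_nonneg_of_nonpos hM2 hm.le
      have h1 : Y b' ≤ Y τ := hanti ⟨le_rfl, hτb'.le⟩ ⟨hτb'.le, le_rfl⟩ hτb'.le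
      have h2 : y₀ < Y b' := habove b' hτb' hb'le
      linarith [hYτ.2]
  -- ## consequences along the trajectory
  have hmY : ∀ ℓ ∈ Icc (0:ℝ) Θ, deriv (M1 β σh δ c f) (Y ℓ) < 0 := by
    intro ℓ hℓ
    exact hmneg (Y ℓ) (hrange ℓ hℓ).1 (hrange ℓ hℓ).2
  have hODE' : ∀ ℓ ∈ Icc (0:ℝ) Θ,
      deriv (M1 β σh δ c f) (Y ℓ) * Yd ℓ = M2 β σh δ c f (Y ℓ) := by
    intro ℓ hℓ
    rw [hODE ℓ hℓ]
    field_simp [(hmY ℓ hℓ).ne]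
  -- ## the integrand of r and its continuity
  set q : ℝ → ℝ := fun x => (1 - Yd x) * (P1 (Y x) / P (Y x)) with hqdef
  set qc : ℝ → ℝ := fun x =>
    (1 - M2 β σh δ c f (Y x) / deriv (M1 β σh δ c f) (Y x)) * (P1 (Y x) / P (Y x)) with hqcdef
  have hqeq : EqOn q qc (Icc 0 Θ) := by
    intro x hx
    show (1 - Yd x) * (P1 (Y x) / P (Y x))
        = (1 - M2 β σh δ c f (Y x) / deriv (M1 β σh δ c f) (Y x)) * (P1 (Y x) / P (Y x))
    rw [hODE x hx]
  have hM2cont : Continuous (M2 β σh δ c f) := by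
    have hfun : M2 β σh δ c f
        = fun y => (f1 y * P1 y - f y * P2 y) / (P1 y ^ 2 - P y * P2 y) := rfl
    rw [hfun]
    exact ((hf1cont.mul hP1cont).sub (hfcont.mul hP2cont)).div
      ((hP1cont.pow 2).sub (hPcont.mul hP2cont)) (fun y => (hDneg y).ne)
  have hqccont : ContinuousOn qc (Icc 0 Θ) := by
    apply ContinuousOn.mul
    · apply ContinuousOn.sub continuousOn_const
      exact ((hM2cont.comp_continuousOn hYcont).div
        (hmcont.comp_continuousOn hYcont) (fun x hx => (hmY x hx).ne))
    · exact (hP1cont.comp_continuousOn hYcont).div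
        (hPcont.comp_continuousOn hYcont) (fun x hx => (hP0 (Y x)).ne')
  have hqcont : ContinuousOn q (Icc 0 Θ) := hqccont.congr hqeq
  have hqint : IntegrableOn q (Icc 0 Θ) := hqcont.integrableOn_compact isCompact_Icc
  have hqII : ∀ ℓ ∈ Icc (0:ℝ) Θ, IntervalIntegrable q volume 0 ℓ := by
    intro ℓ hℓ
    apply IntegrableOn.intervalIntegrable
    rw [uIcc_of_le hℓ.1]
    exact hqint.mono_set (Icc_subset_Icc le_rfl hℓ.2)
  have hrcont : ContinuousOn r (Icc 0 Θ) := by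
    have hh : ContinuousOn (fun ℓ => ∫ x in (0:ℝ)..ℓ, q x) (uIcc 0 Θ) := by
      apply intervalIntegral.continuousOn_primitive_interval
      rw [uIcc_of_le hΘ.le]
      exact hqint
    rw [uIcc_of_le hΘ.le] at hh
    exact hh
  -- ## the primitive W and its derivative
  have hM1cont : Continuous (M1 β σh δ c f) :=
    Differentiable.continuous (fun y => (hM1d y).differentiableAt)
  set W : ℝ → ℝ := fun ℓ => P (Y ℓ) * M1 β σh δ c f (Y ℓ) * Real.exp (r ℓ) with hWdef
  have hWcont : ContinuousOn W (Icc 0 Θ) :=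
    ((hPcont.comp_continuousOn hYcont).mul (hM1cont.comp_continuousOn hYcont)).mul
      (Real.continuous_exp.comp_continuousOn hrcont)
  have hWderiv : ∀ ℓ ∈ Ioo (0:ℝ) Θ, HasDerivAt W (f (Y ℓ) * Real.exp (r ℓ)) ℓ := by
    intro ℓ hℓ
    have hℓΘ : ℓ ∈ Icc (0:ℝ) Θ := ⟨hℓ.1.le, hℓ.2.le⟩
    have hYat : HasDerivAt Y (Yd ℓ) ℓ := (hYd ℓ hℓΘ).hasDerivAt (Icc_mem_nhds hℓ.1 hℓ.2)
    have hPY : HasDerivAt (fun x => P (Y x)) (P1 (Y ℓ) * Yd ℓ) ℓ :=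
      (hPd1 (Y ℓ)).comp ℓ hYat
    have hM1Y : HasDerivAt (fun x => M1 β σh δ c f (Y x))
        (deriv (M1 β σh δ c f) (Y ℓ) * Yd ℓ) ℓ := by
      have hcomp := (hM1d (Y ℓ)).comp ℓ hYat
      rw [hderivM1]
      exact hcomp
    have hqa : ContinuousAt q ℓ := hqcont.continuousAt (Icc_mem_nhds hℓ.1 hℓ.2)
    have hmeasq : StronglyMeasurableAtFilter q (𝓝 ℓ) :=
      ⟨Icc 0 Θ, Icc_mem_nhds hℓ.1 hℓ.2, hqcont.aestronglyMeasurable measurableSet_Icc⟩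
    have hr' : HasDerivAt r (q ℓ) ℓ :=
      intervalIntegral.integral_hasDerivAt_right (hqII ℓ hℓΘ) hmeasq hqa
    have hexp : HasDerivAt (fun x => Real.exp (r x)) (Real.exp (r ℓ) * q ℓ) ℓ := hr'.exp
    have hWd : HasDerivAt W
        ((P1 (Y ℓ) * Yd ℓ * M1 β σh δ c f (Y ℓ)
            + P (Y ℓ) * (deriv (M1 β σh δ c f) (Y ℓ) * Yd ℓ)) * Real.exp (r ℓ)
          + P (Y ℓ) * M1 β σh δ c f (Y ℓ) * (Real.exp (r ℓ) * q ℓ)) ℓ :=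
      (hPY.mul hM1Y).mul hexp
    convert hWd using 1
    have hODEℓ := hODE' ℓ hℓΘ
    have hkey := hkeyid (Y ℓ)
    have hqℓ : q ℓ = (1 - Yd ℓ) * (P1 (Y ℓ) / P (Y ℓ)) := rfl
    rw [hqℓ, hODEℓ, ← hkey]
    have hPne : P (Y ℓ) ≠ 0 := (hP0 (Y ℓ)).ne'
    field_simp
    ring
  -- ## FTC and conclusion
  have hint2 : IntervalIntegrable (fun ℓ => f (Y ℓ) * Real.exp (r ℓ)) volume 0 Θ := by
    apply ContinuousOn.intervalIntegrable
    rw [uIcc_of_le hΘ.le]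
    exact (hfcont.comp_continuousOn hYcont).mul (Real.continuous_exp.comp_continuousOn hrcont)
  have hFTC : (∫ ℓ in (0:ℝ)..Θ, f (Y ℓ) * Real.exp (r ℓ)) = W Θ - W 0 :=
    intervalIntegral.integral_eq_sub_of_hasDeriv_right_of_le hΘ.le hWcont
      (fun ℓ hℓ => (hWderiv ℓ hℓ).hasDerivWithinAt) hint2
  have hW0 : W 0 = 0 := by
    show P (Y 0) * M1 β σh δ c f (Y 0) * Real.exp (r 0) = 0
    rw [hY0, hM1y₀]
    ring
  rw [hFTC, hW0, sub_zero]
  show Real.exp (-(r Θ)) * (P (Y Θ) * M1 β σh δ c f (Y Θ) * Real.exp (r Θ))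
      = P (Y Θ) * M1 β σh δ c f (Y Θ)
  rw [Real.exp_neg]
  field_simp [Real.exp_ne_zero]
end

section
/- Let R > 0, κ > 0, and let α, β : [0,R] × ℝ → ℝ be three times continuously differentiable; define F̂(r,u,p) := α(r,u) + β(r,u)·p (a Lagrangian affine in the derivative variable). Let w : [0,R] → ℝ be continuously differentiable and suppose: (i) the Euler–Lagrange equation holds along w, i.e. ∂_u α(r, w(r)) = ∂_r β(r, w(r)) for all r ∈ [0,R]; (ii) Q(r) := (1/2)·(∂_{uu} α(r, w(r)) - ∂_{ru} β(r, w(r))) ≤ -κ for all r ∈ [0,R]. Then there exists ε > 0 such that for every continuously differentiable h : [0,R] → ℝ with h(0) = h(R) = 0, h not identically zero, and max(sup|h|, sup|h'|) < ε, one has ∫₀^R F̂(r, w(r)+h(r), w'(r)+h'(r)) dr < ∫₀^R F̂(r, w(r), w'(r)) dr; that is, w is a strict local maximizer of the functional in the W^{1,∞} sense. -/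
open MeasureTheory Real intervalIntegral

lemma hasDerivAt_comp2 {f : ℝ × ℝ → ℝ} (hf : Differentiable ℝ f) {g₁ g₂ : ℝ → ℝ}
    {g₁' g₂' t : ℝ} (h1 : HasDerivAt g₁ g₁' t) (h2 : HasDerivAt g₂ g₂' t) :
    HasDerivAt (fun s => f (g₁ s, g₂ s))
      (g₁' * fderiv ℝ f (g₁ t, g₂ t) (1, 0) + g₂' * fderiv ℝ f (g₁ t, g₂ t) (0, 1)) t := by
  have H := (hf (g₁ t, g₂ t)).hasFDerivAt.comp_hasDerivAt t (h1.prodMk h2)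
  refine H.congr_deriv ?_
  have hv : (g₁', g₂') = g₁' • ((1 : ℝ), (0 : ℝ)) + g₂' • ((0 : ℝ), (1 : ℝ)) := by
    simp [Prod.ext_iff]
  rw [hv, map_add, ContinuousLinearMap.map_smul, ContinuousLinearMap.map_smul,
    smul_eq_mul, smul_eq_mul]

lemma contDiff_fderiv_apply {n : ℕ} {f : ℝ × ℝ → ℝ} (hf : ContDiff ℝ (n + 1) f) (v : ℝ × ℝ) :
    ContDiff ℝ n (fun p => fderiv ℝ f p v) := by
  have : ContDiff ℝ n (fderiv ℝ f) := hf.fderiv_right (by norm_cast)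
  exact this.clm_apply contDiff_const

/-- Abstract second-variation argument: for a Lagrangian `F̂(r,u,p) = α(r,u) + β(r,u)·p`
affine in the derivative variable, if the Euler–Lagrange equation `∂_u α = ∂_r β` holds
along `w` and `Q(r) := ½(∂_{uu}α - ∂_{ru}β)(r, w(r)) ≤ -κ < 0` on `[0,R]`, then `w` is a
strict local maximizer of `v ↦ ∫₀^R F̂(r, v, v') dr` among `C¹` perturbations vanishing at
the endpoints, in the `W^{1,∞}` sense. -/
theorem strict_local_maximizer_affine_lagrangian
    (R κ : ℝ) (hR : 0 < R) (hκ : 0 < κ)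
    (A B : ℝ → ℝ → ℝ)
    (hA : ContDiff ℝ 3 (fun p : ℝ × ℝ => A p.1 p.2))
    (hB : ContDiff ℝ 3 (fun p : ℝ × ℝ => B p.1 p.2))
    (w : ℝ → ℝ) (hw : ContDiff ℝ 1 w)
    (hEL : ∀ r ∈ Set.Icc (0 : ℝ) R,
      deriv (fun u => A r u) (w r) = deriv (fun s => B s (w r)) r)
    (hQ : ∀ r ∈ Set.Icc (0 : ℝ) R,
      (1 / 2 : ℝ) * (deriv (deriv (fun u => A r u)) (w r)
        - deriv (fun s => deriv (fun u => B s u) (w r)) r) ≤ -κ) :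
    ∃ ε > (0 : ℝ), ∀ h : ℝ → ℝ, ContDiff ℝ 1 h → h 0 = 0 → h R = 0 →
      (∃ r ∈ Set.Icc (0 : ℝ) R, h r ≠ 0) →
      (∀ r ∈ Set.Icc (0 : ℝ) R, |h r| < ε ∧ |deriv h r| < ε) →
      (∫ r in (0 : ℝ)..R, (A r (w r + h r) + B r (w r + h r) * (deriv w r + deriv h r)))
        < ∫ r in (0 : ℝ)..R, (A r (w r) + B r (w r) * deriv w r) := by

  set Ah : ℝ × ℝ → ℝ := fun p => A p.1 p.2 with hAh
  set Bh : ℝ × ℝ → ℝ := fun p => B p.1 p.2 with hBh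
  have hA3 : ContDiff ℝ ((2 : ℕ) + 1) Ah := by exact_mod_cast hA
  have hB3 : ContDiff ℝ ((2 : ℕ) + 1) Bh := by exact_mod_cast hB
  have hA1 : Differentiable ℝ Ah := hA.differentiable (by norm_num)
  have hB1 : Differentiable ℝ Bh := hB.differentiable (by norm_num)
  set Au : ℝ × ℝ → ℝ := fun p => fderiv ℝ Ah p (0, 1) with hAu
  set Bu : ℝ × ℝ → ℝ := fun p => fderiv ℝ Bh p (0, 1) with hBu
  set Br : ℝ × ℝ → ℝ := fun p => fderiv ℝ Bh p (1, 0) with hBr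
  have hAu2 : ContDiff ℝ (2 : ℕ) Au := contDiff_fderiv_apply hA3 _
  have hBu2 : ContDiff ℝ (2 : ℕ) Bu := contDiff_fderiv_apply hB3 _
  have hBr2 : ContDiff ℝ (2 : ℕ) Br := contDiff_fderiv_apply hB3 _
  set G : ℝ × ℝ → ℝ := fun p => Au p - Br p with hG
  have hG2 : ContDiff ℝ (2 : ℕ) G := hAu2.sub hBr2
  have hG1 : Differentiable ℝ G := hG2.differentiable (by norm_num)
  set Gu : ℝ × ℝ → ℝ := fun p => fderiv ℝ G p (0, 1) with hGu
  have hGu1 : ContDiff ℝ (1 : ℕ) Gu := by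
    have : ContDiff ℝ ((1 : ℕ) + 1) G := by exact_mod_cast hG2
    exact contDiff_fderiv_apply this _
  have hGuc : Continuous Gu := hGu1.continuous
  -- partial derivative facts
  have dAu : ∀ r u : ℝ, deriv (fun u => A r u) u = Au (r, u) := by
    intro r u
    have : HasDerivAt (fun u => A r u) (0 * fderiv ℝ Ah (r, u) (1, 0) + 1 * Au (r, u)) u := by
      exact hasDerivAt_comp2 hA1 (hasDerivAt_const u r) (hasDerivAt_id u)
    simpa using this.deriv
  have dBr : ∀ r u : ℝ, deriv (fun s => B s u) r = Br (r, u) := by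
    intro r u
    have : HasDerivAt (fun s => B s u) (1 * Br (r, u) + 0 * fderiv ℝ Bh (r, u) (0, 1)) r :=
      hasDerivAt_comp2 hB1 (hasDerivAt_id r) (hasDerivAt_const r u)
    simpa using this.deriv
  have dBu : ∀ r u : ℝ, deriv (fun u => B r u) u = Bu (r, u) := by
    intro r u
    have : HasDerivAt (fun u => B r u) (0 * fderiv ℝ Bh (r, u) (1, 0) + 1 * Bu (r, u)) u :=
      hasDerivAt_comp2 hB1 (hasDerivAt_const u r) (hasDerivAt_id u)
    simpa using this.deriv
  -- second derivative facts
  have dAuu : ∀ r u : ℝ, deriv (deriv (fun u => A r u)) u = fderiv ℝ Au (r, u) (0, 1) := by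
    intro r u
    have he : deriv (fun u => A r u) = fun u => Au (r, u) := funext fun u => dAu r u
    rw [he]
    have : HasDerivAt (fun u => Au (r, u))
        (0 * fderiv ℝ Au (r, u) (1, 0) + 1 * fderiv ℝ Au (r, u) (0, 1)) u :=
      hasDerivAt_comp2 (hAu2.differentiable (by norm_num)) (hasDerivAt_const u r)
        (hasDerivAt_id u)
    simpa using this.deriv
  have dBur : ∀ r u : ℝ, deriv (fun s => deriv (fun u => B s u) u) r
      = fderiv ℝ Bu (r, u) (1, 0) := by
    intro r u
    have he : (fun s => deriv (fun u => B s u) u) = fun s => Bu (s, u) :=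
      funext fun s => dBu s u
    rw [he]
    have : HasDerivAt (fun s => Bu (s, u))
        (1 * fderiv ℝ Bu (r, u) (1, 0) + 0 * fderiv ℝ Bu (r, u) (0, 1)) r :=
      hasDerivAt_comp2 (hBu2.differentiable (by norm_num)) (hasDerivAt_id r)
        (hasDerivAt_const r u)
    simpa using this.deriv
  -- Clairaut
  have symm : ∀ p : ℝ × ℝ, fderiv ℝ Br p (0, 1) = fderiv ℝ Bu p (1, 0) := by
    intro p
    have hfd : ∀ y, HasFDerivAt Bh (fderiv ℝ Bh y) y := fun y => (hB1 y).hasFDerivAt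
    have hd2 : HasFDerivAt (fderiv ℝ Bh) (fderiv ℝ (fderiv ℝ Bh) p) p := by
      have : ContDiff ℝ (2 : ℕ) (fderiv ℝ Bh) := hB3.fderiv_right (by norm_cast)
      exact ((this.differentiable (by norm_num)) p).hasFDerivAt
    have hsymm := second_derivative_symmetric hfd hd2 ((0 : ℝ), (1 : ℝ)) ((1 : ℝ), (0 : ℝ))
    have e1 : fderiv ℝ Br p (0, 1) = (fderiv ℝ (fderiv ℝ Bh) p) (0, 1) (1, 0) := by
      show fderiv ℝ (fun q => (fderiv ℝ Bh q) ((1 : ℝ), (0 : ℝ))) p (0, 1) = _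
      rw [fderiv_clm_apply hd2.differentiableAt (differentiableAt_const _)]
      simp [ContinuousLinearMap.flip_apply]
    have e2 : fderiv ℝ Bu p (1, 0) = (fderiv ℝ (fderiv ℝ Bh) p) (1, 0) (0, 1) := by
      show fderiv ℝ (fun q => (fderiv ℝ Bh q) ((0 : ℝ), (1 : ℝ))) p (1, 0) = _
      rw [fderiv_clm_apply hd2.differentiableAt (differentiableAt_const _)]
      simp [ContinuousLinearMap.flip_apply]
    rw [e1, e2, hsymm]
  -- EL and Q in clean form
  have hEL' : ∀ r ∈ Set.Icc (0 : ℝ) R, G (r, w r) = 0 := by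
    intro r hr
    have := hEL r hr
    rw [dAu, dBr] at this
    simp [hG, this]
  have hQ' : ∀ r ∈ Set.Icc (0 : ℝ) R, Gu (r, w r) ≤ -(2 * κ) := by
    intro r hr
    have hq := hQ r hr
    rw [dAuu, dBur] at hq
    have hs : fderiv ℝ (fun p => Au p - Br p) (r, w r)
        = fderiv ℝ Au (r, w r) - fderiv ℝ Br (r, w r) :=
      fderiv_fun_sub (hAu2.differentiable (by norm_num)).differentiableAt
        (hBr2.differentiable (by norm_num)).differentiableAt
    have : Gu (r, w r) = fderiv ℝ Au (r, w r) (0, 1) - fderiv ℝ Br (r, w r) (0, 1) := by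
      show fderiv ℝ (fun p => Au p - Br p) (r, w r) (0, 1) = _
      rw [hs]; simp
    rw [this, symm]
    linarith
  -- choose ε via a thickening argument
  have hKc : IsCompact ((fun r => (r, w r)) '' Set.Icc 0 R) :=
    isCompact_Icc.image (continuous_id.prodMk hw.continuous)
  have hU : IsOpen {p : ℝ × ℝ | Gu p < -κ} := isOpen_lt hGuc continuous_const
  have hKU : ((fun r => (r, w r)) '' Set.Icc 0 R) ⊆ {p : ℝ × ℝ | Gu p < -κ} := by
    rintro p ⟨r, hr, rfl⟩
    have := hQ' r hr
    simp only [Set.mem_setOf_eq]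
    nlinarith
  obtain ⟨δ₀, hδ₀, hthick⟩ := hKc.exists_thickening_subset_open hU hKU
  have key : ∀ r ∈ Set.Icc (0 : ℝ) R, ∀ y : ℝ, |y| ≤ δ₀ / 2 → Gu (r, w r + y) < -κ := by
    intro r hr y hy
    have hmem : (r, w r + y) ∈ Metric.thickening δ₀ ((fun r => (r, w r)) '' Set.Icc 0 R) := by
      rw [Metric.mem_thickening_iff]
      refine ⟨(r, w r), ⟨r, hr, rfl⟩, ?_⟩
      rw [Prod.dist_eq]
      simp only [dist_self, Real.dist_eq, add_sub_cancel_left]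
      rw [max_eq_right (abs_nonneg y)]
      linarith
    exact hthick hmem
  refine ⟨δ₀ / 2, by positivity, ?_⟩
  intro h hh hh0 hhR hne hsmall
  -- basic facts about w and h
  have hwd : ∀ r, HasDerivAt w (deriv w r) r := fun r =>
    ((hw.differentiable one_ne_zero) r).hasDerivAt
  have hhd : ∀ r, HasDerivAt h (deriv h r) r := fun r =>
    ((hh.differentiable one_ne_zero) r).hasDerivAt
  have hwc : Continuous (deriv w) := hw.continuous_deriv le_rfl
  have hhc' : Continuous (deriv h) := hh.continuous_deriv le_rfl
  have hhc : Continuous h := hh.continuous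
  have hAc : Continuous Ah := hA.continuous
  have hBc : Continuous Bh := hB.continuous
  have hAuc : Continuous Au := hAu2.continuous
  have hBuc : Continuous Bu := hBu2.continuous
  have hBrc : Continuous Br := hBr2.continuous
  have hGc : Continuous G := hG2.continuous
  -- the t-derivative of the integrand along the path t ↦ w + t•h
  set φd : ℝ → ℝ → ℝ := fun r t =>
    Au (r, w r + t * h r) * h r
      + Bu (r, w r + t * h r) * h r * (deriv w r + t * deriv h r)
      + B r (w r + t * h r) * deriv h r with hφd
  have cpath : Continuous (fun p : ℝ × ℝ => (p.1, w p.1 + p.2 * h p.1)) :=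
    continuous_fst.prodMk ((hw.continuous.comp continuous_fst).add
      (continuous_snd.mul (hhc.comp continuous_fst)))
  have cφd : Continuous (fun p : ℝ × ℝ => φd p.1 p.2) := by
    apply Continuous.add
    apply Continuous.add
    · exact (hAuc.comp cpath).mul (hhc.comp continuous_fst)
    · exact (((hBuc.comp cpath).mul (hhc.comp continuous_fst)).mul
        ((hwc.comp continuous_fst).add (continuous_snd.mul (hhc'.comp continuous_fst))))
    · exact (hBc.comp cpath).mul (hhc'.comp continuous_fst)
  -- Step 1 : fundamental theorem of calculus in t
  have step1 : ∀ r : ℝ,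
      (A r (w r + h r) + B r (w r + h r) * (deriv w r + deriv h r))
        - (A r (w r) + B r (w r) * deriv w r) = ∫ t in (0 : ℝ)..1, φd r t := by
    intro r
    have hder : ∀ t ∈ Set.uIcc (0 : ℝ) 1,
        HasDerivAt (fun t => A r (w r + t * h r)
          + B r (w r + t * h r) * (deriv w r + t * deriv h r)) (φd r t) t := by
      intro t _
      have hvt : HasDerivAt (fun t : ℝ => w r + t * h r) (h r) t := by
        simpa using ((hasDerivAt_id t).mul_const (h r)).const_add (w r)
      have hA' : HasDerivAt (fun t : ℝ => A r (w r + t * h r))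
          (0 * fderiv ℝ Ah (r, w r + t * h r) (1, 0) + h r * Au (r, w r + t * h r)) t :=
        hasDerivAt_comp2 hA1 (hasDerivAt_const t r) hvt
      have hB' : HasDerivAt (fun t : ℝ => B r (w r + t * h r))
          (0 * fderiv ℝ Bh (r, w r + t * h r) (1, 0) + h r * Bu (r, w r + t * h r)) t :=
        hasDerivAt_comp2 hB1 (hasDerivAt_const t r) hvt
      have hlin : HasDerivAt (fun t : ℝ => deriv w r + t * deriv h r) (deriv h r) t := by
        simpa using ((hasDerivAt_id t).mul_const (deriv h r)).const_add (deriv w r)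
      have := hA'.add (hB'.mul hlin)
      refine this.congr_deriv ?_
      simp [hφd]; ring
    have hint : IntervalIntegrable (φd r) volume 0 1 :=
      ((cφd.comp (Continuous.prodMk_right r)).intervalIntegrable 0 1)
    rw [intervalIntegral.integral_eq_sub_of_hasDerivAt hder hint]
    norm_num
  -- integrability of the two integrands over [0, R]
  have cnew : Continuous (fun r =>
      A r (w r + h r) + B r (w r + h r) * (deriv w r + deriv h r)) := by
    have cp : Continuous (fun r : ℝ => ((r, w r + h r) : ℝ × ℝ)) :=
      continuous_id.prodMk (hw.continuous.add hhc)
    exact (hAc.comp cp).add ((hBc.comp cp).mul (hwc.add hhc'))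
  have cold : Continuous (fun r => A r (w r) + B r (w r) * deriv w r) := by
    have cp : Continuous (fun r : ℝ => ((r, w r) : ℝ × ℝ)) :=
      continuous_id.prodMk hw.continuous
    exact (hAc.comp cp).add ((hBc.comp cp).mul hwc)
  -- Step 2 : Fubini
  have hprodInt : Integrable (Function.uncurry φd)
      ((volume.restrict (Set.Ioc (0 : ℝ) R)).prod (volume.restrict (Set.Ioc (0 : ℝ) 1))) := by
    rw [MeasureTheory.Measure.prod_restrict]
    have hIcc : IntegrableOn (Function.uncurry φd)
        (Set.Icc (0 : ℝ) R ×ˢ Set.Icc (0 : ℝ) 1) (volume.prod volume) :=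
      (cφd.continuousOn).integrableOn_compact (isCompact_Icc.prod isCompact_Icc)
    exact hIcc.mono_set (Set.prod_mono Set.Ioc_subset_Icc_self Set.Ioc_subset_Icc_self)
  have swap : (∫ r in (0 : ℝ)..R, ∫ t in (0 : ℝ)..1, φd r t)
      = ∫ t in (0 : ℝ)..1, ∫ r in (0 : ℝ)..R, φd r t := by
    simp_rw [intervalIntegral.integral_of_le hR.le, intervalIntegral.integral_of_le
      (zero_le_one : (0 : ℝ) ≤ 1)]
    exact MeasureTheory.integral_integral_swap hprodInt
  -- Step 3 : integration by parts in r, for each fixed t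
  have step3 : ∀ t : ℝ, (∫ r in (0 : ℝ)..R, φd r t)
      = ∫ r in (0 : ℝ)..R, G (r, w r + t * h r) * h r := by
    intro t
    set ρd : ℝ → ℝ := fun r =>
      (1 * Br (r, w r + t * h r)
        + (deriv w r + t * deriv h r) * Bu (r, w r + t * h r)) * h r
        + B r (w r + t * h r) * deriv h r with hρd
    have cpt : Continuous (fun r : ℝ => ((r, w r + t * h r) : ℝ × ℝ)) :=
      continuous_id.prodMk (hw.continuous.add ((continuous_const.mul hhc)))
    have cρd : Continuous ρd := by
      apply Continuous.add
      · exact (((continuous_const.mul (hBrc.comp cpt)).add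
          ((hwc.add (continuous_const.mul hhc')).mul (hBuc.comp cpt))).mul hhc)
      · exact (hBc.comp cpt).mul hhc'
    have hρ : ∀ r ∈ Set.uIcc (0 : ℝ) R,
        HasDerivAt (fun r => B r (w r + t * h r) * h r) (ρd r) r := by
      intro r _
      have hvr : HasDerivAt (fun r => w r + t * h r) (deriv w r + t * deriv h r) r :=
        (hwd r).add ((hhd r).const_mul t)
      have hBc' : HasDerivAt (fun r => B r (w r + t * h r))
          (1 * Br (r, w r + t * h r)
            + (deriv w r + t * deriv h r) * Bu (r, w r + t * h r)) r :=
        hasDerivAt_comp2 hB1 (hasDerivAt_id r) hvr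
      exact hBc'.mul (hhd r)
    have hFTC : (∫ r in (0 : ℝ)..R, ρd r) = 0 := by
      rw [intervalIntegral.integral_eq_sub_of_hasDerivAt hρ (cρd.intervalIntegrable 0 R)]
      simp [hh0, hhR]
    have hsplit : ∀ r : ℝ, φd r t = G (r, w r + t * h r) * h r + ρd r := by
      intro r
      simp only [hφd, hρd, hG]
      ring
    have cGh : Continuous (fun r => G (r, w r + t * h r) * h r) :=
      (hGc.comp cpt).mul hhc
    calc (∫ r in (0 : ℝ)..R, φd r t)
        = ∫ r in (0 : ℝ)..R, (G (r, w r + t * h r) * h r + ρd r) := by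
          apply intervalIntegral.integral_congr
          intro r _
          exact hsplit r
      _ = (∫ r in (0 : ℝ)..R, G (r, w r + t * h r) * h r) + ∫ r in (0 : ℝ)..R, ρd r :=
          intervalIntegral.integral_add (cGh.intervalIntegrable 0 R)
            (cρd.intervalIntegrable 0 R)
      _ = ∫ r in (0 : ℝ)..R, G (r, w r + t * h r) * h r := by rw [hFTC, add_zero]
  -- Step 4 : pointwise second-order estimate
  have point : ∀ t ∈ Set.Icc (0 : ℝ) 1, ∀ r ∈ Set.Icc (0 : ℝ) R,
      G (r, w r + t * h r) * h r ≤ -κ * t * (h r) ^ 2 := by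
    intro t ht r hr
    have hcε : |h r| < δ₀ / 2 := (hsmall r hr).1
    set χ : ℝ → ℝ := fun y => G (r, w r + y) + κ * y with hχ
    have hχd : ∀ y : ℝ, HasDerivAt χ (Gu (r, w r + y) + κ) y := by
      intro y
      have h1 : HasDerivAt (fun y => G (r, w r + y))
          (0 * fderiv ℝ G (r, w r + y) (1, 0) + 1 * Gu (r, w r + y)) y := by
        have hvy : HasDerivAt (fun y : ℝ => w r + y) 1 y := (hasDerivAt_id y).const_add (w r)
        exact hasDerivAt_comp2 hG1 (hasDerivAt_const y r) hvy
      have h2 : HasDerivAt (fun y : ℝ => κ * y) κ y := by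
        simpa using (hasDerivAt_id y).const_mul κ
      have := h1.add h2
      exact this.congr_deriv (by simp)
    have hχanti : AntitoneOn χ (Set.Icc (-(δ₀ / 2)) (δ₀ / 2)) := by
      apply antitoneOn_of_deriv_nonpos (convex_Icc _ _)
      · exact Continuous.continuousOn (by
          have : Continuous (fun y => G (r, w r + y)) :=
            hGc.comp (continuous_const.prodMk (continuous_const.add continuous_id))
          exact this.add (continuous_const.mul continuous_id))
      · intro y _
        exact (hχd y).differentiableAt.differentiableWithinAt
      · intro y hy
        rw [(hχd y).deriv]
        rw [interior_Icc] at hy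
        have : |y| ≤ δ₀ / 2 := by
          rw [abs_le]; constructor <;> [linarith [hy.1]; linarith [hy.2]]
        have := key r hr y this
        linarith
    have hmemb : t * h r ∈ Set.Icc (-(δ₀ / 2)) (δ₀ / 2) := by
      have : |t * h r| ≤ δ₀ / 2 := by
        rw [abs_mul]
        have h1 : |t| ≤ 1 := by rw [abs_le]; exact ⟨by linarith [ht.1], ht.2⟩
        nlinarith [abs_nonneg (h r), abs_nonneg t]
      rw [abs_le] at this
      exact ⟨this.1, this.2⟩
    have h0mem : (0 : ℝ) ∈ Set.Icc (-(δ₀ / 2)) (δ₀ / 2) := by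
      constructor
      · simp; positivity
      · positivity
    have hχ0 : χ 0 = 0 := by
      simp only [hχ, mul_zero, add_zero]
      exact hEL' r hr
    rcases le_or_gt 0 (h r) with hc | hc
    · have h0t : (0 : ℝ) ≤ t * h r := mul_nonneg ht.1 hc
      have := hχanti h0mem hmemb h0t
      rw [hχ0] at this
      have hGle : G (r, w r + t * h r) ≤ -(κ * (t * h r)) := by
        simp only [hχ] at this; linarith
      nlinarith
    · have h0t : t * h r ≤ 0 := mul_nonpos_of_nonneg_of_nonpos ht.1 hc.le
      have := hχanti hmemb h0mem h0t
      rw [hχ0] at this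
      have hGge : -(κ * (t * h r)) ≤ G (r, w r + t * h r) := by
        simp only [hχ] at this; linarith
      nlinarith
  -- put everything together
  have cInner : Continuous (fun t => ∫ r in (0 : ℝ)..R, G (r, w r + t * h r) * h r) := by
    apply intervalIntegral.continuous_parametric_intervalIntegral_of_continuous'
    have : Continuous (fun p : ℝ × ℝ => G (p.2, w p.2 + p.1 * h p.2) * h p.2) := by
      have cp2 : Continuous (fun p : ℝ × ℝ => ((p.2, w p.2 + p.1 * h p.2) : ℝ × ℝ)) :=
        continuous_snd.prodMk ((hw.continuous.comp continuous_snd).add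
          (continuous_fst.mul (hhc.comp continuous_snd)))
      exact (hGc.comp cp2).mul (hhc.comp continuous_snd)
    exact this
  set I : ℝ := ∫ r in (0 : ℝ)..R, (h r) ^ 2 with hI
  have hIpos : 0 < I := by
    obtain ⟨r₀, hr₀, hr₀ne⟩ := hne
    have hnonneg : (0 : ℝ → ℝ) ≤ᵐ[volume] fun r => (h r) ^ 2 :=
      Filter.Eventually.of_forall fun r => sq_nonneg (h r)
    rw [hI, intervalIntegral.integral_pos_iff_support_of_nonneg_ae hnonneg
      ((hhc.pow 2).intervalIntegrable 0 R)]
    refine ⟨hR, ?_⟩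
    have hopen : IsOpen (Function.support (fun r => (h r) ^ 2) ∩ Set.Ioo 0 R) :=
      ((hhc.pow 2).isOpen_support).inter isOpen_Ioo
    have hr₀0 : r₀ ≠ 0 := fun e => hr₀ne (e ▸ hh0)
    have hr₀R : r₀ ≠ R := fun e => hr₀ne (e ▸ hhR)
    have hr₀mem : r₀ ∈ Function.support (fun r => (h r) ^ 2) ∩ Set.Ioo 0 R := by
      constructor
      · simp only [Function.mem_support]
        positivity
      · exact ⟨lt_of_le_of_ne hr₀.1 (Ne.symm hr₀0), lt_of_le_of_ne hr₀.2 hr₀R⟩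
    calc (0 : ENNReal) < volume (Function.support (fun r => (h r) ^ 2) ∩ Set.Ioo 0 R) :=
          hopen.measure_pos volume ⟨r₀, hr₀mem⟩
      _ ≤ volume (Function.support (fun r => (h r) ^ 2) ∩ Set.Ioc 0 R) :=
          measure_mono (Set.inter_subset_inter_right _ Set.Ioo_subset_Ioc_self)
  have estimate : (∫ t in (0 : ℝ)..1, ∫ r in (0 : ℝ)..R, G (r, w r + t * h r) * h r)
      ≤ -(κ / 2) * I := by
    have inner_bound : ∀ t ∈ Set.Icc (0 : ℝ) 1,
        (∫ r in (0 : ℝ)..R, G (r, w r + t * h r) * h r)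
          ≤ ∫ r in (0 : ℝ)..R, -κ * t * (h r) ^ 2 := by
      intro t ht
      have cpt : Continuous (fun r : ℝ => ((r, w r + t * h r) : ℝ × ℝ)) :=
        continuous_id.prodMk (hw.continuous.add ((continuous_const.mul hhc)))
      apply intervalIntegral.integral_mono_on hR.le
        (((hGc.comp cpt).mul hhc).intervalIntegrable 0 R)
        ((continuous_const.mul (hhc.pow 2)).intervalIntegrable 0 R)
      intro r hr
      exact point t ht r hr
    have rhs_eval : ∀ t : ℝ, (∫ r in (0 : ℝ)..R, -κ * t * (h r) ^ 2) = -κ * t * I := by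
      intro t
      rw [hI, ← intervalIntegral.integral_const_mul]
    calc (∫ t in (0 : ℝ)..1, ∫ r in (0 : ℝ)..R, G (r, w r + t * h r) * h r)
        ≤ ∫ t in (0 : ℝ)..1, -κ * t * I := by
          apply intervalIntegral.integral_mono_on zero_le_one
            (cInner.intervalIntegrable 0 1)
            ((continuous_const.mul continuous_id').mul continuous_const
              |>.intervalIntegrable 0 1)
          intro t ht
          change _ ≤ -κ * t * I
          rw [← rhs_eval t]
          exact inner_bound t ht
      _ = -(κ / 2) * I := by
          have : (∫ t in (0 : ℝ)..1, -κ * t * I) = -κ * I * ∫ t in (0 : ℝ)..1, t := by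
            rw [← intervalIntegral.integral_const_mul]
            apply intervalIntegral.integral_congr
            intro t _
            ring
          rw [this, integral_id]
          ring
  -- conclude
  have hdiff : (∫ r in (0 : ℝ)..R,
        (A r (w r + h r) + B r (w r + h r) * (deriv w r + deriv h r)))
      - (∫ r in (0 : ℝ)..R, (A r (w r) + B r (w r) * deriv w r))
      = ∫ t in (0 : ℝ)..1, ∫ r in (0 : ℝ)..R, G (r, w r + t * h r) * h r := by
    rw [← intervalIntegral.integral_sub (cnew.intervalIntegrable 0 R)
      (cold.intervalIntegrable 0 R)]
    have : (∫ r in (0 : ℝ)..R,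
        ((A r (w r + h r) + B r (w r + h r) * (deriv w r + deriv h r))
          - (A r (w r) + B r (w r) * deriv w r)))
        = ∫ r in (0 : ℝ)..R, ∫ t in (0 : ℝ)..1, φd r t := by
      apply intervalIntegral.integral_congr
      intro r _
      exact step1 r
    rw [this, swap]
    apply intervalIntegral.integral_congr
    intro t _
    exact step3 t
  have hneg : (∫ r in (0 : ℝ)..R,
        (A r (w r + h r) + B r (w r + h r) * (deriv w r + deriv h r)))
      - (∫ r in (0 : ℝ)..R, (A r (w r) + B r (w r) * deriv w r)) < 0 := by
    rw [hdiff]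
    calc (∫ t in (0 : ℝ)..1, ∫ r in (0 : ℝ)..R, G (r, w r + t * h r) * h r)
        ≤ -(κ / 2) * I := estimate
      _ < 0 := by nlinarith
  linarith
end

section
/- Let f, Φ, C, 𝕪 : ℝ → ℝ be continuously differentiable, let U ⊆ ℝ² be open, and let Δ : U → ℝ be continuously differentiable such that 𝕪(θ - Δ(y,θ)) = y - Δ(y,θ) for all (y,θ) ∈ U. Assume the smooth-pasting identity Φ(𝕪(s))·C'(s) + Φ'(𝕪(s))·C(s) = f(𝕪(s)) holds for all s ∈ ℝ. Define V(y,θ) := Φ(y - Δ(y,θ))·C(θ - Δ(y,θ)) + ∫_{y-Δ(y,θ)}^{y} f(x) dx on U. Then V is continuously differentiable on U with ∂V/∂y (y,θ) = Φ'(y - Δ(y,θ))·C(θ - Δ(y,θ)) + f(y) - f(y - Δ(y,θ)) and ∂V/∂θ (y,θ) = Φ(y - Δ(y,θ))·C'(θ - Δ(y,θ)). -/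
open MeasureTheory Real intervalIntegral

/-- Regularity of the candidate value function in the sell region `S₁`:
with `Δ` determined by `𝕪(θ - Δ(y,θ)) = y - Δ(y,θ)` and the smooth-pasting identity
`Φ(𝕪)·C' + Φ'(𝕪)·C = f(𝕪)`, the function
`V(y,θ) = Φ(y-Δ)·C(θ-Δ) + ∫_{y-Δ}^{y} f` is `C¹` on `U` with
`V_y = Φ'(y-Δ)·C(θ-Δ) + f(y) - f(y-Δ)` and `V_θ = Φ(y-Δ)·C'(θ-Δ)`. -/
theorem value_function_sell_region_C1
    (f Φ C Ybd : ℝ → ℝ)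
    (hf : ContDiff ℝ 1 f) (hΦ : ContDiff ℝ 1 Φ) (hC : ContDiff ℝ 1 C)
    (hYbd : ContDiff ℝ 1 Ybd)
    (U : Set (ℝ × ℝ)) (hU : IsOpen U)
    (Δ : ℝ × ℝ → ℝ) (hΔ : ContDiffOn ℝ 1 Δ U)
    (hfix : ∀ p ∈ U, Ybd (p.2 - Δ p) = p.1 - Δ p)
    (hpaste : ∀ s : ℝ, Φ (Ybd s) * deriv C s + deriv Φ (Ybd s) * C s = f (Ybd s)) :
    let V : ℝ × ℝ → ℝ := fun p =>
      Φ (p.1 - Δ p) * C (p.2 - Δ p) + ∫ x in (p.1 - Δ p)..p.1, f x;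
    ContDiffOn ℝ 1 V U ∧
    ∀ p ∈ U,
      HasDerivAt (fun y => V (y, p.2))
        (deriv Φ (p.1 - Δ p) * C (p.2 - Δ p) + f p.1 - f (p.1 - Δ p)) p.1 ∧
      HasDerivAt (fun θ => V (p.1, θ))
        (Φ (p.1 - Δ p) * deriv C (p.2 - Δ p)) p.2 := by
  intro V
  have hfc : Continuous f := hf.continuous
  set F : ℝ → ℝ := fun x => ∫ t in (0:ℝ)..x, f t with hFdef
  have hF : ∀ x : ℝ, HasDerivAt F (f x) x := fun x =>
    intervalIntegral.integral_hasDerivAt_right (hfc.intervalIntegrable _ _)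
      (hfc.stronglyMeasurable.stronglyMeasurableAtFilter) hfc.continuousAt
  have hFderiv : deriv F = f := funext fun x => (hF x).deriv
  have hFC1 : ContDiff ℝ 1 F := contDiff_one_iff_deriv.2
    ⟨fun x => (hF x).differentiableAt, by rw [hFderiv]; exact hfc⟩
  have hVeq : V = fun p : ℝ × ℝ =>
      Φ (p.1 - Δ p) * C (p.2 - Δ p) + (F p.1 - F (p.1 - Δ p)) := by
    funext p
    have : (F p.1 - F (p.1 - Δ p)) = ∫ x in (p.1 - Δ p)..p.1, f x :=
      intervalIntegral.integral_interval_sub_left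
        (hfc.intervalIntegrable _ _) (hfc.intervalIntegrable _ _)
    simp only [V, this]
  have hΦd : Differentiable ℝ Φ := hΦ.differentiable one_ne_zero
  have hCd : Differentiable ℝ C := hC.differentiable one_ne_zero
  constructor
  · rw [hVeq]
    have h1 : ContDiffOn ℝ 1 (fun p : ℝ × ℝ => p.1 - Δ p) U :=
      contDiff_fst.contDiffOn.sub hΔ
    have h2 : ContDiffOn ℝ 1 (fun p : ℝ × ℝ => p.2 - Δ p) U :=
      contDiff_snd.contDiffOn.sub hΔ
    exact ((hΦ.comp_contDiffOn h1).mul (hC.comp_contDiffOn h2)).add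
      ((hFC1.comp_contDiffOn contDiff_fst.contDiffOn).sub (hFC1.comp_contDiffOn h1))
  · intro p hp
    have hΔdiff : DifferentiableAt ℝ Δ p :=
      (hΔ.differentiableOn one_ne_zero).differentiableAt (hU.mem_nhds hp)
    set L := fderiv ℝ Δ p with hL
    have hΔfd : HasFDerivAt Δ L p := hΔdiff.hasFDerivAt
    set a := p.1 - Δ p with ha
    set b := p.2 - Δ p with hb
    have hab : Ybd b = a := hfix p hp
    have hp' : Φ a * deriv C b + deriv Φ a * C b = f a := by
      have := hpaste b; rwa [hab] at this
    constructor
    · -- y-direction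
      set dy := L (1, 0) with hdy
      have hy1 : HasDerivAt (fun y : ℝ => (y, p.2)) ((1 : ℝ), (0 : ℝ)) p.1 :=
        HasDerivAt.prodMk (hasDerivAt_id p.1) (hasDerivAt_const p.1 p.2)
      have hδy : HasDerivAt (fun y => Δ (y, p.2)) dy p.1 :=
        hΔfd.comp_hasDerivAt p.1 hy1
      have hA : HasDerivAt (fun y => y - Δ (y, p.2)) (1 - dy) p.1 :=
        (hasDerivAt_id p.1).sub hδy
      have hB : HasDerivAt (fun y => p.2 - Δ (y, p.2)) (0 - dy) p.1 :=
        (hasDerivAt_const p.1 p.2).sub hδy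
      have hΦA : HasDerivAt (fun y => Φ (y - Δ (y, p.2))) (deriv Φ a * (1 - dy)) p.1 :=
        ((hΦd a).hasDerivAt).comp p.1 hA
      have hCB : HasDerivAt (fun y => C (p.2 - Δ (y, p.2))) (deriv C b * (0 - dy)) p.1 :=
        ((hCd b).hasDerivAt).comp p.1 hB
      have hFA : HasDerivAt (fun y => F (y - Δ (y, p.2))) (f a * (1 - dy)) p.1 :=
        by have := (hF a).comp p.1 hA; exact this
      have htot : HasDerivAt (fun y => V (y, p.2))
          (deriv Φ a * (1 - dy) * C b + Φ a * (deriv C b * (0 - dy))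
            + (f p.1 - f a * (1 - dy))) p.1 := by
        rw [hVeq]
        exact (hΦA.mul hCB).add ((hF p.1).sub hFA)
      convert htot using 1
      linear_combination dy * hp'
    · -- θ-direction
      set dθ := L (0, 1) with hdθ
      have hy1 : HasDerivAt (fun θ : ℝ => (p.1, θ)) ((0 : ℝ), (1 : ℝ)) p.2 :=
        HasDerivAt.prodMk (hasDerivAt_const p.2 p.1) (hasDerivAt_id p.2)
      have hδθ : HasDerivAt (fun θ => Δ (p.1, θ)) dθ p.2 :=
        hΔfd.comp_hasDerivAt p.2 hy1
      have hA : HasDerivAt (fun θ => p.1 - Δ (p.1, θ)) (0 - dθ) p.2 :=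
        (hasDerivAt_const p.2 p.1).sub hδθ
      have hB : HasDerivAt (fun θ => θ - Δ (p.1, θ)) (1 - dθ) p.2 :=
        (hasDerivAt_id p.2).sub hδθ
      have hΦA : HasDerivAt (fun θ => Φ (p.1 - Δ (p.1, θ))) (deriv Φ a * (0 - dθ)) p.2 :=
        ((hΦd a).hasDerivAt).comp p.2 hA
      have hCB : HasDerivAt (fun θ => C (θ - Δ (p.1, θ))) (deriv C b * (1 - dθ)) p.2 :=
        ((hCd b).hasDerivAt).comp p.2 hB
      have hFA : HasDerivAt (fun θ => F (p.1 - Δ (p.1, θ))) (f a * (0 - dθ)) p.2 :=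
        by have := (hF a).comp p.2 hA; exact this
      have htot : HasDerivAt (fun θ => V (p.1, θ))
          (deriv Φ a * (0 - dθ) * C b + Φ a * (deriv C b * (1 - dθ))
            + (0 - f a * (0 - dθ))) p.2 := by
        rw [hVeq]
        exact (hΦA.mul hCB).add ((hasDerivAt_const p.2 (F p.1)).sub hFA)
      convert htot using 1
      linear_combination dθ * hp'
end
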